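/- arXiv:2411.14024 — 14 statements merged into one kernel-verified Lean document; each statement's English description precedes it below -/
import Mathlib

section
/- Suppose v : ℝ → ℝ is a C³ solution of -c·v' + A·v·v' + B·v²·v' + (M+N)·v''' = 0 with v(r) ≠ 0 for all r, and suppose 3B·v⁴ + 4A·v³ - 6c·v² + 6(M+N)(2v·v'' - (v')²) = C₃ identically. Then I₂(r) = (B·v(r)⁴ + 2A·v(r)³ + 6(M+N)·v'(r)² - 6c·v(r)² + C₃)/v(r) is constant. -/
/-- The function I₂ = (B·v⁴ + 2A·v³ + 6(M+N)·v₁² - 6c·v² + C₃)/v is constant along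
nonvanishing solutions of the traveling-wave ODE on the level set I₃ = C₃. -/
theorem stmt_3 (A B M N c C₃ : ℝ) (hMN : M + N ≠ 0)
    (v : ℝ → ℝ) (hv : ContDiff ℝ 3 v) (hvne : ∀ r : ℝ, v r ≠ 0)
    (hode : ∀ r : ℝ,
      -c * deriv v r + A * v r * deriv v r + B * (v r) ^ 2 * deriv v r
        + (M + N) * deriv^[3] v r = 0)
    (hI3 : ∀ r : ℝ,
      3 * B * (v r) ^ 4 + 4 * A * (v r) ^ 3 - 6 * c * (v r) ^ 2
        + 6 * (M + N) * (2 * v r * deriv^[2] v r - (deriv v r) ^ 2) = C₃) :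
    ∀ r s : ℝ,
      (B * (v r) ^ 4 + 2 * A * (v r) ^ 3 + 6 * (M + N) * (deriv v r) ^ 2
          - 6 * c * (v r) ^ 2 + C₃) / v r
        = (B * (v s) ^ 4 + 2 * A * (v s) ^ 3 + 6 * (M + N) * (deriv v s) ^ 2
          - 6 * c * (v s) ^ 2 + C₃) / v s := by
  have hv1 : Differentiable ℝ v := hv.differentiable (by norm_num)
  have hv2 : ContDiff ℝ 2 (deriv v) :=
    (contDiff_succ_iff_deriv.mp (show ContDiff ℝ (2 + 1) v from by exact_mod_cast hv)).2.2
  have hv1' : Differentiable ℝ (deriv v) := hv2.differentiable (by norm_num)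
  set f : ℝ → ℝ := fun r =>
    (B * (v r) ^ 4 + 2 * A * (v r) ^ 3 + 6 * (M + N) * (deriv v r) ^ 2
      - 6 * c * (v r) ^ 2 + C₃) / v r with hf
  have key : ∀ r : ℝ, HasDerivAt f 0 r := by
    intro r
    have hdv : HasDerivAt v (deriv v r) r := (hv1 r).hasDerivAt
    have hdv' : HasDerivAt (deriv v) (deriv (deriv v) r) r := (hv1' r).hasDerivAt
    have hnum := ((((hdv.pow 4).const_mul B).add ((hdv.pow 3).const_mul (2 * A))).add
        ((hdv'.pow 2).const_mul (6 * (M + N)))).sub ((hdv.pow 2).const_mul (6 * c))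
        |>.add_const C₃
    have := hnum.div hdv (hvne r)
    refine this.congr_deriv ?_
    have h3 := hI3 r
    simp only [Function.iterate_succ, Function.iterate_zero, Function.comp_apply, id_eq] at h3
    have hvr := hvne r
    rw [div_eq_iff (pow_ne_zero 2 hvr), zero_mul]
    push_cast [Pi.add_apply, Pi.sub_apply, Pi.pow_apply]
    linear_combination (deriv v r) * h3
  have hconst := is_const_of_deriv_eq_zero (fun r => (key r).differentiableAt)
    (fun r => (key r).deriv)
  intro r s
  exact hconst r s
end

section
/- If v : ℝ → ℝ satisfies the first-order equation 6(M+N)·v'(r)² = -B·v(r)⁴ - 2A·v(r)³ + 6c·v(r)² + C₂·v(r) - C₃ and is C³ with v(r) ≠ 0, then v satisfies the third-order ODE -c·v' + A·v·v' + B·v²·v' + (M+N)·v''' = 0. -/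
open Filter Topology Set

lemma aux_zero_of_cluster {f : ℝ → ℝ} {r : ℝ} {S : Set ℝ} (hf : ContinuousAt f r)
    (hS : ∀ x ∈ S, f x = 0) (hne : (𝓝[S] r).NeBot) : f r = 0 := by
  have h1 : Tendsto f (𝓝[S] r) (𝓝 (f r)) := hf.tendsto.mono_left nhdsWithin_le_nhds
  have h2 : Tendsto f (𝓝[S] r) (𝓝 0) := by
    refine tendsto_const_nhds.congr' ?_
    filter_upwards [self_mem_nhdsWithin] with x hx
    exact (hS x hx).symm
  exact tendsto_nhds_unique h1 h2

lemma aux_deriv_zero_of_cluster {f : ℝ → ℝ} {a r : ℝ} (hf : HasDerivAt f a r)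
    (h0 : f r = 0) (hne : (𝓝[{x | f x = 0} \ {r}] r).NeBot) : a = 0 := by
  have h1 : Tendsto (slope f r) (𝓝[{x | f x = 0} \ {r}] r) (𝓝 a) :=
    (hasDerivAt_iff_tendsto_slope.mp hf).mono_left
      (nhdsWithin_mono r (fun x hx => hx.2))
  have h2 : Tendsto (slope f r) (𝓝[{x | f x = 0} \ {r}] r) (𝓝 0) := by
    refine tendsto_const_nhds.congr' ?_
    filter_upwards [self_mem_nhdsWithin] with x hx
    simp [slope_def_field, hx.1.out, h0]
  exact tendsto_nhds_unique h1 h2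

/-- Solutions of the reduced first-order equation solve the original third-order
traveling-wave ODE of the mZK equation. -/
theorem stmt_4 (A B M N c C₂ C₃ : ℝ) (hMN : M + N ≠ 0)
    (v : ℝ → ℝ) (hv : ContDiff ℝ 3 v) (hvne : ∀ r : ℝ, v r ≠ 0)
    (hfirst : ∀ r : ℝ,
      6 * (M + N) * (deriv v r) ^ 2
        = -B * (v r) ^ 4 - 2 * A * (v r) ^ 3 + 6 * c * (v r) ^ 2
          + C₂ * v r - C₃) :
    ∀ r : ℝ,
      -c * deriv v r + A * v r * deriv v r + B * (v r) ^ 2 * deriv v r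
        + (M + N) * deriv^[3] v r = 0 := by
  set v1 : ℝ → ℝ := deriv v with hv1def
  set v2 : ℝ → ℝ := deriv v1 with hv2def
  set v3 : ℝ → ℝ := deriv v2 with hv3def
  have hiter : deriv^[3] v = v3 := by
    simp [hv1def, hv2def, hv3def, Function.iterate_succ, Function.iterate_zero]
  have hvN : ContDiff ℝ ((3:ℕ) : WithTop ℕ∞) v := by exact_mod_cast hv
  have hc1 : ContDiff ℝ ((2:ℕ) : WithTop ℕ∞) v1 := by
    have := ContDiff.iterate_deriv' 2 1
      (by exact_mod_cast hvN : ContDiff ℝ ((2+1:ℕ) : WithTop ℕ∞) v)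
    simpa using this
  have hc2 : ContDiff ℝ ((1:ℕ) : WithTop ℕ∞) v2 := by
    have := ContDiff.iterate_deriv' 1 1
      (by exact_mod_cast hc1 : ContDiff ℝ ((1+1:ℕ) : WithTop ℕ∞) v1)
    simpa using this
  have hd1 : ∀ x, HasDerivAt v (v1 x) x := fun x =>
    ((hvN.differentiable (by norm_num)) x).hasDerivAt
  have hd2 : ∀ x, HasDerivAt v1 (v2 x) x := fun x =>
    ((hc1.differentiable (by norm_num)) x).hasDerivAt
  have hd3 : ∀ x, HasDerivAt v2 (v3 x) x := fun x =>
    ((hc2.differentiable (by norm_num)) x).hasDerivAt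
  have hvc : Continuous v := hvN.continuous
  have h1c : Continuous v1 := hc1.continuous
  have h2c : Continuous v2 := hc2.continuous
  set w : ℝ → ℝ := fun x =>
    12 * (M + N) * v2 x + 4 * B * (v x) ^ 3 + 6 * A * (v x) ^ 2 - 12 * c * v x - C₂
    with hwdef
  have hwcont : Continuous w := by fun_prop
  have hdw : ∀ x, HasDerivAt w
      (12 * (M + N) * v3 x + (12 * B * (v x) ^ 2 + 12 * A * v x - 12 * c) * v1 x) x := by
    intro x
    have h := (((((hd3 x).const_mul (12 * (M + N))).add
        (((hd1 x).pow 3).const_mul (4 * B))).add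
        (((hd1 x).pow 2).const_mul (6 * A))).sub
        ((hd1 x).const_mul (12 * c))).sub (hasDerivAt_const x C₂)
    refine h.congr_deriv ?_
    ring
  -- differentiate the first integral: v1 * w = 0 everywhere
  have hkey : ∀ x, v1 x * w x = 0 := by
    intro x
    set g : ℝ → ℝ := fun y =>
      6 * (M + N) * (v1 y) ^ 2 + B * (v y) ^ 4 + 2 * A * (v y) ^ 3 - 6 * c * (v y) ^ 2
        - C₂ * v y + C₃ with hgdef
    have hg0 : g = fun _ => (0:ℝ) := by
      funext y
      have h := hfirst y
      simp only [hgdef]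
      linarith
    have hdg : HasDerivAt g (v1 x * w x) x := by
      have h := (((((((hd2 x).pow 2).const_mul (6 * (M + N))).add
          (((hd1 x).pow 4).const_mul B)).add
          (((hd1 x).pow 3).const_mul (2 * A))).sub
          (((hd1 x).pow 2).const_mul (6 * c))).sub
          ((hd1 x).const_mul C₂)).add (hasDerivAt_const x C₃)
      refine h.congr_deriv ?_
      simp only [hwdef]
      ring
    have hz : HasDerivAt g 0 x := by rw [hg0]; exact hasDerivAt_const x 0
    exact hdg.unique hz
  intro r
  have hw'zero : 12 * (M + N) * v3 r + (12 * B * (v r) ^ 2 + 12 * A * v r - 12 * c) * v1 r = 0 := by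
    by_cases hcl : (𝓝[{x | v1 x = 0} \ {r}] r).NeBot
    · -- r is a cluster point of zeros of v1
      have hv1r : v1 r = 0 :=
        aux_zero_of_cluster h1c.continuousAt (fun x hx => hx.1.out) hcl
      have hv2r : v2 r = 0 := aux_deriv_zero_of_cluster (hd2 r) hv1r hcl
      have hcl2 : (𝓝[{x | v2 x = 0} \ {r}] r).NeBot := by
        rw [← mem_closure_iff_nhdsWithin_neBot] at hcl ⊢
        rw [Metric.mem_closure_iff] at hcl ⊢
        intro ε hε
        obtain ⟨z, hz, hdist⟩ := hcl ε hε
        have hzr : z ≠ r := fun h => hz.2 (by simp [h])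
        have hz0 : v1 z = 0 := hz.1.out
        rw [Real.dist_eq, abs_lt] at hdist
        rcases lt_or_gt_of_ne hzr with hlt | hgt
        · obtain ⟨s, hs, hs0⟩ := exists_deriv_eq_zero hlt
            h1c.continuousOn (by rw [hz0, hv1r])
          exact ⟨s, ⟨hs0, fun h => absurd (h.out ▸ hs.2) (lt_irrefl r)⟩,
            by rw [Real.dist_eq, abs_lt];
               exact ⟨by nlinarith [hs.1, hs.2], by nlinarith [hs.1, hs.2]⟩⟩
        · obtain ⟨s, hs, hs0⟩ := exists_deriv_eq_zero hgt
            h1c.continuousOn (by rw [hz0, hv1r])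
          exact ⟨s, ⟨hs0, fun h => absurd (h.out ▸ hs.1) (lt_irrefl r)⟩,
            by rw [Real.dist_eq, abs_lt];
               exact ⟨by nlinarith [hs.1, hs.2], by nlinarith [hs.1, hs.2]⟩⟩
      have hv3r : v3 r = 0 := aux_deriv_zero_of_cluster (hd3 r) hv2r hcl2
      rw [hv1r, hv3r]; ring
    · -- zeros of v1 do not cluster at r : w vanishes near r
      rw [← mem_closure_iff_nhdsWithin_neBot] at hcl
      set U : Set ℝ := (closure ({x | v1 x = 0} \ {r}))ᶜ with hUdef
      have hUopen : IsOpen U := isClosed_closure.isOpen_compl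
      have hUr : U ∈ 𝓝 r := hUopen.mem_nhds hcl
      have hUzero : ∀ x ∈ U, x ≠ r → w x = 0 := by
        intro x hxU hxr
        have hx1 : v1 x ≠ 0 := by
          intro h0
          exact hxU (subset_closure ⟨h0, hxr⟩)
        have := hkey x
        exact (mul_eq_zero.mp this).resolve_left hx1
      have hwr : w r = 0 := by
        by_cases hv1r : v1 r = 0
        · -- use continuity of w along the punctured neighborhood
          have hne : (𝓝[U \ {r}] r).NeBot := by
            rw [Set.diff_eq]
            rw [nhdsWithin_inter_of_mem
              (mem_nhdsWithin_of_mem_nhds hUr)]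
            exact Filter.NeBot.mono inferInstance le_rfl
          exact aux_zero_of_cluster hwcont.continuousAt
            (fun x hx => hUzero x hx.1 hx.2) hne
        · have := hkey r
          exact (mul_eq_zero.mp this).resolve_left hv1r
      have hweq : w =ᶠ[𝓝 r] fun _ => (0:ℝ) := by
        filter_upwards [hUr] with x hx
        by_cases hxr : x = r
        · rw [hxr]; exact hwr
        · exact hUzero x hx hxr
      have hderiv0 : deriv w r = 0 := by
        rw [hweq.deriv_eq]; exact deriv_const r 0
      have := (hdw r).deriv
      rw [hderiv0] at this
      linarith [this]
  rw [hiter]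
  linear_combination (1/12) * hw'zero
end

section
/- Let A ≠ 0 and M + N ≠ 0. The function v(r) = -12(M+N)/(A·(C₁ - r)²) + c/A, defined for r ≠ C₁, satisfies the ODE -c·v' + A·v·v' + (M+N)·v''' = 0 (the case B = 0). -/
/-- The rational traveling-wave solution corresponding to a triple root of the
cubic polynomial (case B = 0) solves the reduced ODE. -/
theorem stmt_5 (A M N c C₁ : ℝ) (hA : A ≠ 0) (hMN : M + N ≠ 0)
    (v : ℝ → ℝ)
    (hvdef : ∀ r : ℝ, v r = -12 * (M + N) / (A * (C₁ - r) ^ 2) + c / A) :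
    ∀ r : ℝ, r ≠ C₁ →
      -c * deriv v r + A * v r * deriv v r + (M + N) * deriv^[3] v r = 0 := by
  intro r hr
  have key : ∀ (K : ℝ) (m : ℕ) (x : ℝ), x ≠ C₁ →
      HasDerivAt (fun r => K / (A * (C₁ - r) ^ (m + 1)))
        ((m + 1) * K / (A * (C₁ - x) ^ (m + 2))) x := by
    intro K m x hx
    have hx' : C₁ - x ≠ 0 := sub_ne_zero.mpr (Ne.symm hx)
    have hb : HasDerivAt (fun r => A * (C₁ - r) ^ (m + 1))
        (A * ((m + 1) * (C₁ - x) ^ m * (-1))) x := by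
      have h1 : HasDerivAt (fun r : ℝ => C₁ - r) (-1) x := by
        simpa using (hasDerivAt_id x).const_sub C₁
      simpa using ((h1.pow (m + 1)).const_mul A)
    have hne : A * (C₁ - x) ^ (m + 1) ≠ 0 := mul_ne_zero hA (pow_ne_zero _ hx')
    have := (hasDerivAt_const x K).fun_div hb hne
    refine this.congr_deriv ?_
    field_simp
    ring
  have hopen : ∀ x : ℝ, x ≠ C₁ → {y : ℝ | y ≠ C₁} ∈ nhds x :=
    fun x hx => isOpen_ne.mem_nhds hx
  set g1 : ℝ → ℝ := fun x => (-24 * (M + N)) / (A * (C₁ - x) ^ (2 + 1)) with hg1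
  set g2 : ℝ → ℝ := fun x => (-72 * (M + N)) / (A * (C₁ - x) ^ (3 + 1)) with hg2
  set g3 : ℝ → ℝ := fun x => (-288 * (M + N)) / (A * (C₁ - x) ^ (4 + 1)) with hg3
  have hd1 : ∀ x, x ≠ C₁ → HasDerivAt v (g1 x) x := by
    intro x hx
    have hv : v = fun r => (-12 * (M + N)) / (A * (C₁ - r) ^ (1 + 1)) + c / A := by
      funext y; rw [hvdef y]
    rw [hv]
    have h := (key (-12 * (M + N)) 1 x hx).add_const (c / A)
    have he : ((1:ℕ) + 1 : ℝ) * (-12 * (M + N)) / (A * (C₁ - x) ^ (1 + 2)) = g1 x := by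
      rw [hg1]; push_cast; ring
    exact he ▸ h
  have hd2 : ∀ x, x ≠ C₁ → HasDerivAt g1 (g2 x) x := by
    intro x hx
    have h := key (-24 * (M + N)) 2 x hx
    have he : ((2:ℕ) + 1 : ℝ) * (-24 * (M + N)) / (A * (C₁ - x) ^ (2 + 2)) = g2 x := by
      rw [hg2]; push_cast; ring
    exact he ▸ h
  have hd3 : ∀ x, x ≠ C₁ → HasDerivAt g2 (g3 x) x := by
    intro x hx
    have h := key (-72 * (M + N)) 3 x hx
    have he : ((3:ℕ) + 1 : ℝ) * (-72 * (M + N)) / (A * (C₁ - x) ^ (3 + 2)) = g3 x := by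
      rw [hg3]; push_cast; ring
    exact he ▸ h
  have hdv1 : ∀ x, x ≠ C₁ → deriv v x = g1 x := fun x hx => (hd1 x hx).deriv
  have hdv2 : ∀ x, x ≠ C₁ → deriv (deriv v) x = g2 x := by
    intro x hx
    have heq : deriv v =ᶠ[nhds x] g1 :=
      Filter.eventuallyEq_of_mem (hopen x hx) (fun y hy => hdv1 y hy)
    rw [heq.deriv_eq, (hd2 x hx).deriv]
  have hdv3 : ∀ x, x ≠ C₁ → deriv (deriv (deriv v)) x = g3 x := by
    intro x hx
    have heq : deriv (deriv v) =ᶠ[nhds x] g2 :=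
      Filter.eventuallyEq_of_mem (hopen x hx) (fun y hy => hdv2 y hy)
    rw [heq.deriv_eq, (hd3 x hx).deriv]
  have hiter : deriv^[3] v = deriv (deriv (deriv v)) := by
    simp only [Function.iterate_succ_apply', Function.iterate_zero_apply]
  rw [hiter, hdv1 r hr, hdv3 r hr, hvdef r, hg1, hg3]
  have hx' : C₁ - r ≠ 0 := sub_ne_zero.mpr (Ne.symm hr)
  field_simp
  ring
end

section
/- Let A ≠ 0, M + N > 0, c - A·φ > 0, and let v(r) = φ + 6(c - Aφ)/(A·(1 + cosh(√((c - Aφ)/(M+N))·(C₁ - r)))). Then v satisfies the ODE -c·v' + A·v·v' + (M+N)·v''' = 0 on the set where the denominator is nonzero. -/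
/-- The solitary-wave solution of the B = 0 traveling-wave ODE corresponding to a
double root φ with c - Aφ > 0 and M + N > 0. -/
theorem stmt_6 (A M N c φ C₁ : ℝ) (hA : A ≠ 0) (hMN : 0 < M + N)
    (hφ : 0 < c - A * φ) (v : ℝ → ℝ)
    (hvdef : ∀ r : ℝ, v r = φ + 6 * (c - A * φ) /
      (A * (1 + Real.cosh (Real.sqrt ((c - A * φ) / (M + N)) * (C₁ - r))))) :
    ∀ r : ℝ,
      A * (1 + Real.cosh (Real.sqrt ((c - A * φ) / (M + N)) * (C₁ - r))) ≠ 0 →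
      -c * deriv v r + A * v r * deriv v r + (M + N) * deriv^[3] v r = 0 := by
  set k : ℝ := Real.sqrt ((c - A * φ) / (M + N)) with hkdef
  have hk2 : k ^ 2 = (c - A * φ) / (M + N) := Real.sq_sqrt (by positivity)
  have hc' : (M + N) * k ^ 2 = c - A * φ := by
    rw [hk2]; field_simp
  set K : ℝ := 6 * (c - A * φ) / A with hKdef
  have hAK : A * K = 6 * (c - A * φ) := by
    rw [hKdef]; field_simp
  set ch : ℝ → ℝ := fun x => Real.cosh (k * (C₁ - x)) with hchdef
  set sh : ℝ → ℝ := fun x => Real.sinh (k * (C₁ - x)) with hshdef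
  have hfpos : ∀ x, (0:ℝ) < 1 + ch x := fun x => by
    have := Real.cosh_pos (x := k * (C₁ - x)); simp only [hchdef]; linarith
  have hfne : ∀ x, (1 + ch x) ≠ 0 := fun x => (hfpos x).ne'
  set g : ℝ → ℝ := fun x => (1 + ch x)⁻¹ with hgdef
  have hu : ∀ x : ℝ, HasDerivAt (fun y => k * (C₁ - y)) (-k) x := by
    intro x
    have := ((hasDerivAt_id x).const_sub C₁).const_mul k
    simpa using this
  have hch : ∀ x, HasDerivAt ch (-(k * sh x)) x := by
    intro x
    have := (hu x).cosh
    simpa [hchdef, hshdef, mul_comm] using this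
  have hsh : ∀ x, HasDerivAt sh (-(k * ch x)) x := by
    intro x
    have := (hu x).sinh
    simpa [hchdef, hshdef, mul_comm] using this
  have hg : ∀ x, HasDerivAt g (k * sh x * g x ^ 2) x := by
    intro x
    have h1 : HasDerivAt (fun y => 1 + ch y) (-(k * sh x)) x := (hch x).const_add 1
    have := h1.inv (hfne x)
    refine this.congr_deriv ?_
    simp only [hgdef]
    field_simp
  have hveq : v = fun y => φ + K * g y := by
    funext y
    rw [hvdef y]
    simp only [hgdef, hchdef, hKdef]
    field_simp
  have hv1 : ∀ x, HasDerivAt v (K * k * (sh x * g x ^ 2)) x := by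
    intro x
    rw [hveq]
    have := ((hg x).const_mul K).const_add φ
    refine this.congr_deriv ?_
    ring
  set V1 : ℝ → ℝ := fun x => K * k * (sh x * g x ^ 2) with hV1def
  have hdv1 : deriv v = V1 := funext fun x => (hv1 x).deriv
  set V2 : ℝ → ℝ := fun x => K * k ^ 2 * (-(ch x * g x ^ 2) + 2 * (sh x ^ 2 * g x ^ 3)) with hV2def
  have hv2 : ∀ x, HasDerivAt V1 (V2 x) x := by
    intro x
    have := ((hsh x).mul ((hg x).pow 2)).const_mul (K * k)
    refine this.congr_deriv ?_
    simp only [hV2def]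
    push_cast [Pi.pow_apply]
    ring
  have hdv2 : deriv V1 = V2 := funext fun x => (hv2 x).deriv
  set V3 : ℝ → ℝ := fun x =>
      K * k ^ 3 * (sh x * g x ^ 2 - 6 * (sh x * ch x * g x ^ 3) + 6 * (sh x ^ 3 * g x ^ 4))
    with hV3def
  have hv3 : ∀ x, HasDerivAt V2 (V3 x) x := by
    intro x
    have := ((((hch x).mul ((hg x).pow 2)).neg).add
      ((((hsh x).pow 2).mul ((hg x).pow 3)).const_mul 2)).const_mul (K * k ^ 2)
    refine this.congr_deriv ?_
    simp only [hV3def]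
    push_cast [Pi.pow_apply]
    ring
  intro r _
  have h3 : deriv^[3] v r = V3 r := by
    have : deriv^[3] v = deriv (deriv (deriv v)) := by
      simp [Function.iterate_succ, Function.comp]
    rw [this, hdv1, hdv2, (hv3 r).deriv]
  rw [h3, hdv1, hveq]
  simp only [hV1def, hV3def]
  have e1 : sh r ^ 2 = ch r ^ 2 - 1 := by
    simp only [hshdef, hchdef]; rw [Real.sinh_sq]
  have e2 : (1 + ch r) * g r = 1 := mul_inv_cancel₀ (hfne r)
  have e5 : sh r ^ 2 * g r = ch r - 1 := by
    linear_combination g r * e1 + (ch r - 1) * e2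
  linear_combination (K * k * sh r * g r ^ 3) * hAK +
    (K * k * sh r * g r ^ 2 * (1 - 6 * ch r * g r + 6 * sh r ^ 2 * g r ^ 2)) * hc' +
    (6 * (c - A * φ) * K * k * sh r * g r ^ 3) * e5
end

section
/- Let B ≠ 0, K = -6(M+N)/B > 0, and c = -A²/(4B). Then v(r) = -A/(2B) + √K/(C₁ - r), defined for r ≠ C₁, satisfies -c·v' + A·v·v' + B·v²·v' + (M+N)·v''' = 0. -/
private lemma hd1 (a s C₁ : ℝ) {r : ℝ} (hr : r ≠ C₁) :
    HasDerivAt (fun x => a + s * (C₁ - x)⁻¹) (s * ((C₁ - r) ^ 2)⁻¹) r := by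
  have h0 : C₁ - r ≠ 0 := sub_ne_zero.mpr (Ne.symm hr)
  have h : HasDerivAt (fun x => C₁ - x) (-1) r := by
    simpa using (hasDerivAt_id r).const_sub C₁
  have := ((h.fun_inv h0).const_mul s).const_add a
  refine this.congr_deriv ?_
  field_simp

private lemma hd2 (s C₁ : ℝ) {r : ℝ} (hr : r ≠ C₁) :
    HasDerivAt (fun x => s * ((C₁ - x) ^ 2)⁻¹) (2 * s * ((C₁ - r) ^ 3)⁻¹) r := by
  have h0 : C₁ - r ≠ 0 := sub_ne_zero.mpr (Ne.symm hr)
  have h : HasDerivAt (fun x => (C₁ - x) ^ 2) (2 * (C₁ - r) * (-1)) r := by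
    have h1 : HasDerivAt (fun x => C₁ - x) (-1) r := by
      simpa using (hasDerivAt_id r).const_sub C₁
    simpa using h1.fun_pow 2
  have := (h.fun_inv (pow_ne_zero 2 h0)).const_mul s
  refine this.congr_deriv ?_
  field_simp

private lemma hd3 (s C₁ : ℝ) {r : ℝ} (hr : r ≠ C₁) :
    HasDerivAt (fun x => 2 * s * ((C₁ - x) ^ 3)⁻¹) (6 * s * ((C₁ - r) ^ 4)⁻¹) r := by
  have h0 : C₁ - r ≠ 0 := sub_ne_zero.mpr (Ne.symm hr)
  have h : HasDerivAt (fun x => (C₁ - x) ^ 3) (3 * (C₁ - r) ^ 2 * (-1)) r := by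
    have h1 : HasDerivAt (fun x => C₁ - x) (-1) r := by
      simpa using (hasDerivAt_id r).const_sub C₁
    simpa using h1.fun_pow 3
  have := (h.fun_inv (pow_ne_zero 3 h0)).const_mul (2 * s)
  refine this.congr_deriv ?_
  field_simp
  ring

/-- The rational solution corresponding to the quadruple root -A/(2B) of the
quartic polynomial, with c = -A²/(4B) and K = -6(M+N)/B > 0. -/
theorem stmt_8 (A B M N c C₁ K : ℝ) (hB : B ≠ 0)
    (hK : K = -6 * (M + N) / B) (hKpos : 0 < K)
    (hc : c = -A ^ 2 / (4 * B)) (v : ℝ → ℝ)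
    (hvdef : ∀ r : ℝ, v r = -A / (2 * B) + Real.sqrt K / (C₁ - r)) :
    ∀ r : ℝ, r ≠ C₁ →
      -c * deriv v r + A * v r * deriv v r + B * (v r) ^ 2 * deriv v r
        + (M + N) * deriv^[3] v r = 0 := by
  set s := Real.sqrt K with hs
  have hv : v = fun x => -A / (2 * B) + s * (C₁ - x)⁻¹ := by
    funext x; rw [hvdef x]; ring
  -- first derivative, pointwise on r ≠ C₁
  have hderiv1 : ∀ r : ℝ, r ≠ C₁ → deriv v r = s * ((C₁ - r) ^ 2)⁻¹ := by
    intro r hr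
    rw [hv]
    exact (hd1 (-A / (2 * B)) s C₁ hr).deriv
  have hderiv2 : ∀ r : ℝ, r ≠ C₁ → deriv (deriv v) r = 2 * s * ((C₁ - r) ^ 3)⁻¹ := by
    intro r hr
    have heq : deriv v =ᶠ[nhds r] fun x => s * ((C₁ - x) ^ 2)⁻¹ := by
      filter_upwards [isOpen_ne.mem_nhds hr] with x hx
      exact hderiv1 x hx
    rw [heq.deriv_eq]
    exact (hd2 s C₁ hr).deriv
  have hderiv3 : ∀ r : ℝ, r ≠ C₁ →
      deriv (deriv (deriv v)) r = 6 * s * ((C₁ - r) ^ 4)⁻¹ := by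
    intro r hr
    have heq : deriv (deriv v) =ᶠ[nhds r] fun x => 2 * s * ((C₁ - x) ^ 3)⁻¹ := by
      filter_upwards [isOpen_ne.mem_nhds hr] with x hx
      exact hderiv2 x hx
    rw [heq.deriv_eq]
    exact (hd3 s C₁ hr).deriv
  intro r hr
  have h0 : C₁ - r ≠ 0 := sub_ne_zero.mpr (Ne.symm hr)
  have hit : deriv^[3] v r = deriv (deriv (deriv v)) r := by
    simp [Function.iterate_succ, Function.comp]
  have hs2 : s ^ 2 = K := Real.sq_sqrt hKpos.le
  have hMN : M + N = -(s ^ 2 * B) / 6 := by rw [hs2, hK]; field_simp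
  rw [hit, hderiv1 r hr, hderiv3 r hr, hvdef r, hc, hMN, div_eq_mul_inv (Real.sqrt K), ← hs]
  field_simp
  ring
end

section
/- The quartic B·z⁴ + 2A·z³ - 6c·z² - C₂·z + C₃ with B ≠ 0, C₂ = A(A² + 6Bc)/B², C₃ = (A² + 6Bc)²/(4B³), and A² + 4Bc > 0, factors as B·(z - φ₁)²·(z - φ₂)² where φ₁ = -(A + √(3(A² + 4Bc)))/(2B) and φ₂ = -(A - √(3(A² + 4Bc)))/(2B). -/
/-- The quartic P(z) with the indicated coefficients factors with two distinct
real double roots φ₁ and φ₂. -/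
theorem stmt_9 (A B c C₂ C₃ φ₁ φ₂ : ℝ) (hB : B ≠ 0)
    (hdisc : 0 < A ^ 2 + 4 * B * c)
    (hC₂ : C₂ = A * (A ^ 2 + 6 * B * c) / B ^ 2)
    (hC₃ : C₃ = (A ^ 2 + 6 * B * c) ^ 2 / (4 * B ^ 3))
    (hφ₁ : φ₁ = -(A + Real.sqrt (3 * (A ^ 2 + 4 * B * c))) / (2 * B))
    (hφ₂ : φ₂ = -(A - Real.sqrt (3 * (A ^ 2 + 4 * B * c))) / (2 * B)) :
    ∀ z : ℝ,
      B * z ^ 4 + 2 * A * z ^ 3 - 6 * c * z ^ 2 - C₂ * z + C₃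
        = B * (z - φ₁) ^ 2 * (z - φ₂) ^ 2 := by
  intro z
  obtain ⟨s, hs, hφ₁, hφ₂⟩ :
      ∃ s : ℝ, s ^ 2 = 3 * (A ^ 2 + 4 * B * c) ∧
        φ₁ = -(A + s) / (2 * B) ∧ φ₂ = -(A - s) / (2 * B) :=
    ⟨_, Real.sq_sqrt (by linarith), hφ₁, hφ₂⟩
  have hsum : φ₁ + φ₂ = -A / B := by
    rw [hφ₁, hφ₂]; field_simp; ring
  have hprod : φ₁ * φ₂ = -(A ^ 2 + 6 * B * c) / (2 * B ^ 2) := by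
    rw [hφ₁, hφ₂]; field_simp; linear_combination (-1) * hs
  have key : (z - φ₁) * (z - φ₂) = z ^ 2 + (A / B) * z - (A ^ 2 + 6 * B * c) / (2 * B ^ 2) := by
    have h1 : -(φ₁ + φ₂) = A / B := by rw [hsum]; ring
    linear_combination (-z) * hsum + hprod
  have : B * (z - φ₁) ^ 2 * (z - φ₂) ^ 2
      = B * ((z - φ₁) * (z - φ₂)) ^ 2 := by ring
  rw [this, key, hC₂, hC₃]
  field_simp
  ring
end

section
/- Let B ≠ 0, K = -6(M+N)/B > 0, A² + 4Bc > 0, and set φ₁ = -(A + √(3(A²+4Bc)))/(2B), φ₂ = -(A - √(3(A²+4Bc)))/(2B). Then v(r) = φ₁ + (φ₂ - φ₁)/(1 + exp(-((φ₁ - φ₂)/√K)·(C₁ - r))) satisfies -c·v' + A·v·v' + B·v²·v' + (M+N)·v''' = 0. -/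
/-- The kink traveling-wave solution corresponding to two real double roots of
the quartic polynomial P. -/
theorem stmt_10 (A B M N c C₁ K φ₁ φ₂ : ℝ) (hB : B ≠ 0)
    (hK : K = -6 * (M + N) / B) (hKpos : 0 < K)
    (hdisc : 0 < A ^ 2 + 4 * B * c)
    (hφ₁ : φ₁ = -(A + Real.sqrt (3 * (A ^ 2 + 4 * B * c))) / (2 * B))
    (hφ₂ : φ₂ = -(A - Real.sqrt (3 * (A ^ 2 + 4 * B * c))) / (2 * B))
    (v : ℝ → ℝ)
    (hvdef : ∀ r : ℝ, v r = φ₁ + (φ₂ - φ₁) /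
      (1 + Real.exp (-((φ₁ - φ₂) / Real.sqrt K) * (C₁ - r)))) :
    ∀ r : ℝ,
      -c * deriv v r + A * v r * deriv v r + B * (v r) ^ 2 * deriv v r
        + (M + N) * deriv^[3] v r = 0 := by
  have hKne : K ≠ 0 := ne_of_gt hKpos
  set s := Real.sqrt (3 * (A ^ 2 + 4 * B * c)) with hs
  clear_value s
  have hs2 : s ^ 2 = 3 * (A ^ 2 + 4 * B * c) := by rw [hs]; exact Real.sq_sqrt (by nlinarith)
  have hspos : 0 < s := by rw [hs]; exact Real.sqrt_pos.mpr (by nlinarith)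
  set d := φ₂ - φ₁ with hd
  clear_value d
  have hdval : d = s / B := by rw [hd, hφ₁, hφ₂]; field_simp; ring
  have hdne : d ≠ 0 := by rw [hdval]; exact div_ne_zero hspos.ne' hB
  set a := (φ₁ - φ₂) / Real.sqrt K with ha
  clear_value a
  have hrKpos : 0 < Real.sqrt K := Real.sqrt_pos.mpr hKpos
  have hnegd : φ₁ - φ₂ = -d := by rw [hd]; ring
  have hane : a ≠ 0 := by
    rw [ha, hnegd]
    exact div_ne_zero (neg_ne_zero.mpr hdne) hrKpos.ne'
  have ha2 : K * a ^ 2 = d ^ 2 := by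
    rw [ha, hnegd, div_pow, Real.sq_sqrt hKpos.le]
    field_simp
  have hMN : M + N = -(K * B) / 6 := by
    rw [hK]; field_simp
  have hsum : A + 2 * B * φ₁ + B * d = 0 := by
    rw [hφ₁, hdval]; field_simp; ring
  have hconst : -c + A * φ₁ + B * φ₁ ^ 2 - B * d ^ 2 / 6 = 0 := by
    rw [hφ₁, hdval]
    field_simp
    linear_combination 2 * hs2
  -- explicit form of v
  have hveq : v = fun r => φ₁ + d / (1 + Real.exp (a * r - a * C₁)) := by
    funext r
    rw [hvdef r]
    congr 2
    ring
  have hD : ∀ x : ℝ, (1 : ℝ) + Real.exp (a * x - a * C₁) ≠ 0 := by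
    intro x; positivity
  have hy : ∀ x : ℝ, v x - φ₁ = d / (1 + Real.exp (a * x - a * C₁)) := by
    intro x; simp only [hveq]; ring
  have hE : ∀ x : ℝ, HasDerivAt (fun r => Real.exp (a * r - a * C₁))
      (a * Real.exp (a * x - a * C₁)) x := by
    intro x
    have h1 : HasDerivAt (fun r : ℝ => a * r - a * C₁) a x := by
      simpa using ((hasDerivAt_id x).const_mul a).sub_const (a * C₁)
    simpa [mul_comm] using h1.exp
  -- first derivative
  have hv1 : ∀ x : ℝ, HasDerivAt v
      (-a * (v x - φ₁) + a / d * (v x - φ₁) ^ 2) x := by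
    intro x
    have h2 : HasDerivAt v
        ((0 * (1 + Real.exp (a * x - a * C₁)) - d * (a * Real.exp (a * x - a * C₁))) /
          (1 + Real.exp (a * x - a * C₁)) ^ 2) x := by
      rw [hveq]
      exact ((hasDerivAt_const x d).div ((hE x).const_add 1) (hD x)).const_add φ₁
    refine h2.congr_deriv ?_
    rw [hy x]
    have hDx := hD x
    field_simp
    ring
  have hder1 : deriv v = fun x => -a * (v x - φ₁) + a / d * (v x - φ₁) ^ 2 :=
    funext fun x => (hv1 x).deriv
  -- second derivative
  have hv2 : ∀ x : ℝ, HasDerivAt (deriv v)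
      ((-a + 2 * (a / d) * (v x - φ₁)) *
        (-a * (v x - φ₁) + a / d * (v x - φ₁) ^ 2)) x := by
    intro x
    rw [hder1]
    have h1 : HasDerivAt (fun r => v r - φ₁)
        (-a * (v x - φ₁) + a / d * (v x - φ₁) ^ 2) x := (hv1 x).sub_const φ₁
    exact ((h1.const_mul (-a)).add ((h1.pow 2).const_mul (a / d))).congr_deriv
      (by push_cast; ring)
  have hder2 : deriv (deriv v) = fun x =>
      (-a + 2 * (a / d) * (v x - φ₁)) *
        (-a * (v x - φ₁) + a / d * (v x - φ₁) ^ 2) :=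
    funext fun x => (hv2 x).deriv
  -- third derivative
  have hv3 : ∀ x : ℝ, HasDerivAt (deriv (deriv v))
      ((2 * (a / d) * (-a * (v x - φ₁) + a / d * (v x - φ₁) ^ 2) +
          (-a + 2 * (a / d) * (v x - φ₁)) ^ 2) *
        (-a * (v x - φ₁) + a / d * (v x - φ₁) ^ 2)) x := by
    intro x
    rw [hder2]
    have h1 : HasDerivAt (fun r => v r - φ₁)
        (-a * (v x - φ₁) + a / d * (v x - φ₁) ^ 2) x := (hv1 x).sub_const φ₁
    have hQ : HasDerivAt (fun r => -a * (v r - φ₁) + a / d * (v r - φ₁) ^ 2)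
        ((-a + 2 * (a / d) * (v x - φ₁)) *
          (-a * (v x - φ₁) + a / d * (v x - φ₁) ^ 2)) x :=
      ((h1.const_mul (-a)).add ((h1.pow 2).const_mul (a / d))).congr_deriv
        (by push_cast; ring)
    have hQp : HasDerivAt (fun r => -a + 2 * (a / d) * (v r - φ₁))
        (2 * (a / d) * (-a * (v x - φ₁) + a / d * (v x - φ₁) ^ 2)) x :=
      ((h1.const_mul (2 * (a / d))).const_add (-a)).congr_deriv (by ring)
    exact (hQp.mul hQ).congr_deriv (by ring)
  intro r
  have h3 : deriv^[3] v r =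
      (2 * (a / d) * (-a * (v r - φ₁) + a / d * (v r - φ₁) ^ 2) +
          (-a + 2 * (a / d) * (v r - φ₁)) ^ 2) *
        (-a * (v r - φ₁) + a / d * (v r - φ₁) ^ 2) := by
    show deriv^[2 + 1] v r = _
    rw [Function.iterate_succ_apply', Function.iterate_succ_apply',
      Function.iterate_succ_apply', Function.iterate_zero_apply]
    exact (hv3 r).deriv
  rw [h3, hder1, hMN]
  simp only
  set b := a / d with hb
  clear_value b
  have hab : a = b * d := by rw [hb]; field_simp
  have hb2 : K * b ^ 2 = 1 := by
    rw [hb, div_pow]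
    field_simp
    linear_combination ha2
  rw [hab]
  linear_combination
    (-(b * d) * (v r - φ₁) + b * (v r - φ₁) ^ 2) * hconst +
    ((-(b * d) * (v r - φ₁) + b * (v r - φ₁) ^ 2) * (v r - φ₁)) * hsum +
    (-(B / 6) * (d ^ 2 - 6 * d * (v r - φ₁) + 6 * (v r - φ₁) ^ 2) *
      (-(b * d) * (v r - φ₁) + b * (v r - φ₁) ^ 2)) * hb2
end

section
/- Let B ≠ 0, K = -6(M+N)/B > 0, A² + 4Bc < 0, a = -A/(2B), b = √(-3(A² + 4Bc))/(2B). Then v(r) = a - b·tan((b/√K)·(C₁ - r)) satisfies -c·v' + A·v·v' + B·v²·v' + (M+N)·v''' = 0 on any interval where the tangent is defined. -/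
/-- The singular periodic solution corresponding to a pair of complex conjugate
double roots of the quartic polynomial P. -/
theorem stmt_11 (A B M N c C₁ K a b : ℝ) (hB : B ≠ 0)
    (hK : K = -6 * (M + N) / B) (hKpos : 0 < K)
    (hdisc : A ^ 2 + 4 * B * c < 0)
    (ha : a = -A / (2 * B))
    (hb : b = Real.sqrt (-3 * (A ^ 2 + 4 * B * c)) / (2 * B))
    (v : ℝ → ℝ)
    (hvdef : ∀ r : ℝ, v r = a - b * Real.tan ((b / Real.sqrt K) * (C₁ - r))) :
    ∀ r : ℝ, Real.cos ((b / Real.sqrt K) * (C₁ - r)) ≠ 0 →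
      -c * deriv v r + A * v r * deriv v r + B * (v r) ^ 2 * deriv v r
        + (M + N) * deriv^[3] v r = 0 := by
  intro r₀ hcos₀
  set k : ℝ := b / Real.sqrt K with hkdef
  set T : ℝ → ℝ := fun r => Real.tan (k * (C₁ - r)) with hTdef
  have hveq : v = fun r => a - b * T r := funext hvdef
  -- derivative of the inner linear function
  have hθ : ∀ r : ℝ, HasDerivAt (fun x : ℝ => k * (C₁ - x)) (-k) r := by
    intro r
    have h1 : HasDerivAt (fun x : ℝ => C₁ - x) (-1 : ℝ) r := by
      simpa using (hasDerivAt_id r).const_sub C₁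
    simpa using h1.const_mul k
  -- secant identity
  have hsec : ∀ r : ℝ, Real.cos (k * (C₁ - r)) ≠ 0 →
      1 / Real.cos (k * (C₁ - r)) ^ 2 = 1 + T r ^ 2 := by
    intro r h
    have hpy := Real.sin_sq_add_cos_sq (k * (C₁ - r))
    simp only [hTdef, Real.tan_eq_sin_div_cos]
    field_simp
    linarith
  -- derivative of T
  have hTd : ∀ r : ℝ, Real.cos (k * (C₁ - r)) ≠ 0 →
      HasDerivAt T (-k * (1 + T r ^ 2)) r := by
    intro r h
    have := (Real.hasDerivAt_tan h).comp r (hθ r)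
    refine this.congr_deriv ?_
    rw [← hsec r h]; ring
  -- derivative of v
  have hvd : ∀ r : ℝ, Real.cos (k * (C₁ - r)) ≠ 0 →
      HasDerivAt v (b * k * (1 + T r ^ 2)) r := by
    intro r h
    rw [hveq]
    have := ((hTd r h).const_mul b).const_sub a
    refine this.congr_deriv ?_
    ring
  -- the first, second, third derivative formulas
  set w1 : ℝ → ℝ := fun r => b * k * (1 + T r ^ 2) with hw1def
  set w2 : ℝ → ℝ := fun r => -2 * b * k ^ 2 * T r * (1 + T r ^ 2) with hw2def
  have hw1d : ∀ r : ℝ, Real.cos (k * (C₁ - r)) ≠ 0 →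
      HasDerivAt w1 (w2 r) r := by
    intro r h
    have h1 : HasDerivAt (fun x => 1 + T x ^ 2) (2 * T r * (-k * (1 + T r ^ 2))) r := by
      have := ((hTd r h).pow 2).const_add 1
      refine this.congr_deriv ?_
      ring
    have := h1.const_mul (b * k)
    refine this.congr_deriv ?_
    simp only [hw2def, hw1def]; ring
  have hw2d : ∀ r : ℝ, Real.cos (k * (C₁ - r)) ≠ 0 →
      HasDerivAt w2 (2 * b * k ^ 3 * (1 + T r ^ 2) * (1 + 3 * T r ^ 2)) r := by
    intro r h
    have h1 : HasDerivAt (fun x => T x * (1 + T x ^ 2))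
        ((-k * (1 + T r ^ 2)) * (1 + T r ^ 2) + T r * (2 * T r * (-k * (1 + T r ^ 2)))) r := by
      have h2 : HasDerivAt (fun x => 1 + T x ^ 2) (2 * T r * (-k * (1 + T r ^ 2))) r := by
        have := ((hTd r h).pow 2).const_add 1
        refine this.congr_deriv ?_
        ring
      exact (hTd r h).mul h2
    have h3 := h1.const_mul (-2 * b * k ^ 2)
    have heq : w2 = fun y => -2 * b * k ^ 2 * (T y * (1 + T y ^ 2)) := by
      funext y; simp only [hw2def]; ring
    rw [heq]
    refine h3.congr_deriv ?_
    ring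
  -- the cosine is eventually nonzero near r₀
  have hev : ∀ᶠ r in nhds r₀, Real.cos (k * (C₁ - r)) ≠ 0 := by
    have hc : ContinuousAt (fun r : ℝ => Real.cos (k * (C₁ - r))) r₀ := by
      fun_prop
    exact hc.eventually_ne hcos₀
  -- deriv v agrees with w1 near r₀
  have hd1 : deriv v =ᶠ[nhds r₀] w1 := hev.mono fun r h => (hvd r h).deriv
  have hd2 : deriv (deriv v) =ᶠ[nhds r₀] w2 :=
    hd1.deriv.trans (hev.mono fun r h => (hw1d r h).deriv)
  have e1 : deriv v r₀ = w1 r₀ := (hvd r₀ hcos₀).deriv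
  have e3 : deriv^[3] v r₀ = 2 * b * k ^ 3 * (1 + T r₀ ^ 2) * (1 + 3 * T r₀ ^ 2) := by
    have hiter : deriv^[3] v = deriv (deriv (deriv v)) := by
      simp [Function.iterate_succ_apply', Function.comp]
    rw [hiter, hd2.deriv_eq]
    exact (hw2d r₀ hcos₀).deriv
  -- algebraic identities
  have hsK : Real.sqrt K ≠ 0 := by positivity
  have hA' : A + 2 * B * a = 0 := by
    rw [ha]; field_simp; ring
  have hb2 : 4 * B ^ 2 * b ^ 2 = -3 * (A ^ 2 + 4 * B * c) := by
    rw [hb, div_pow, Real.sq_sqrt (by nlinarith : (0:ℝ) ≤ -3 * (A ^ 2 + 4 * B * c))]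
    field_simp
    ring
  have hBb2 : B * b ^ 2 + 3 * B * a ^ 2 + 3 * c = 0 := by
    have h2 : A ^ 2 = 4 * B ^ 2 * a ^ 2 := by
      have : A = -(2 * B * a) := by linarith
      rw [this]; ring
    have h3 : 4 * B ^ 2 * b ^ 2 = -12 * B ^ 2 * a ^ 2 - 12 * B * c := by
      rw [hb2, h2]; ring
    have hB4 : (4 : ℝ) * B ≠ 0 := by simp [hB]
    have h4 : 4 * B * (B * b ^ 2 + 3 * B * a ^ 2 + 3 * c) = 0 := by linear_combination h3
    rcases mul_eq_zero.mp h4 with h | h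
    · exact absurd h hB4
    · exact h
  have hk2 : K * k ^ 2 - b ^ 2 = 0 := by
    rw [hkdef, div_pow, Real.sq_sqrt hKpos.le]
    field_simp
    ring
  have hMN : 6 * (M + N) + K * B = 0 := by
    rw [hK]; field_simp; ring
  have key2 : 2 * (M + N) * k ^ 2 = c + B * a ^ 2 := by
    linear_combination (k ^ 2 / 3) * hMN - (B / 3) * hk2 - (1 / 3) * hBb2
  set t : ℝ := T r₀ with htdef
  have key1 : -c + A * (a - b * t) + B * (a - b * t) ^ 2 = -(c + B * a ^ 2) * (1 + 3 * t ^ 2) := by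
    linear_combination (a - b * t) * hA' + t ^ 2 * hBb2
  rw [e1, e3, hvdef r₀]
  simp only [hw1def]
  linear_combination (b * k * (1 + t ^ 2)) * key1 + (b * k * (1 + t ^ 2) * (1 + 3 * t ^ 2)) * key2
end

section
/- For c > 0 and C₁ ∈ ℝ, the function u(x,y,t) = √(6c)·sech(√(c/2)·(C₁ - x - y + ct)) satisfies the modified Zakharov–Kuznetsov equation u_t + u²·u_x + u_{xxx} + u_{xyy} = 0. -/
open Real

private lemma lin (p q x : ℝ) : HasDerivAt (fun x : ℝ => p + q * x) q x := by
  exact (((hasDerivAt_id x).const_mul q).const_add p).congr_deriv (mul_one q)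

private lemma L1 (A p q x : ℝ) :
    HasDerivAt (fun x => A * (Real.cosh (p + q * x))⁻¹)
      (-(A * q) * Real.sinh (p + q * x) / (Real.cosh (p + q * x)) ^ 2) x := by
  have h := (((lin p q x).cosh).fun_inv
    (Real.cosh_pos (x := p + q * x)).ne').const_mul A
  refine h.congr_deriv ?_
  field_simp

private lemma L2 (B p q x : ℝ) :
    HasDerivAt (fun x => B * Real.sinh (p + q * x) / (Real.cosh (p + q * x)) ^ 2)
      (B * q * ((Real.cosh (p + q * x)) ^ 2 - 2 * (Real.sinh (p + q * x)) ^ 2)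
        / (Real.cosh (p + q * x)) ^ 3) x := by
  have hn : HasDerivAt (fun x => B * Real.sinh (p + q * x))
      (B * (Real.cosh (p + q * x) * q)) x :=
    ((lin p q x).sinh).const_mul B
  have hd : HasDerivAt (fun x => (Real.cosh (p + q * x)) ^ 2)
      (2 * (Real.cosh (p + q * x)) ^ 1 * (Real.sinh (p + q * x) * q)) x := by
    simpa using ((lin p q x).cosh).fun_pow 2
  have h := hn.fun_div hd (by positivity)
  refine h.congr_deriv ?_
  have hC := (Real.cosh_pos (x := p + q * x)).ne'
  field_simp

private lemma L3 (B p q x : ℝ) :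
    HasDerivAt (fun x => B * ((Real.cosh (p + q * x)) ^ 2 - 2 * (Real.sinh (p + q * x)) ^ 2)
        / (Real.cosh (p + q * x)) ^ 3)
      (B * q * Real.sinh (p + q * x) *
        (6 * (Real.sinh (p + q * x)) ^ 2 - 5 * (Real.cosh (p + q * x)) ^ 2)
        / (Real.cosh (p + q * x)) ^ 4) x := by
  have hch : HasDerivAt (fun x => Real.cosh (p + q * x)) (Real.sinh (p + q * x) * q) x :=
    (lin p q x).cosh
  have hsh : HasDerivAt (fun x => Real.sinh (p + q * x)) (Real.cosh (p + q * x) * q) x :=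
    (lin p q x).sinh
  have hn : HasDerivAt (fun x => B * ((Real.cosh (p + q * x)) ^ 2 - 2 * (Real.sinh (p + q * x)) ^ 2))
      (B * (2 * (Real.cosh (p + q * x)) ^ 1 * (Real.sinh (p + q * x) * q)
        - 2 * (2 * (Real.sinh (p + q * x)) ^ 1 * (Real.cosh (p + q * x) * q)))) x :=
    ((hch.pow 2).sub ((hsh.pow 2).const_mul 2)).const_mul B
  have hd : HasDerivAt (fun x => (Real.cosh (p + q * x)) ^ 3)
      (3 * (Real.cosh (p + q * x)) ^ 2 * (Real.sinh (p + q * x) * q)) x := hch.pow 3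
  have h := hn.fun_div hd (by positivity)
  refine h.congr_deriv ?_
  have hC := (Real.cosh_pos (x := p + q * x)).ne'
  field_simp
  ring
/-- The bright-soliton solution of the mZK equation with A = 0, B = M = N = 1. -/
theorem stmt_12 (c C₁ : ℝ) (hc : 0 < c) (u : ℝ → ℝ → ℝ → ℝ)
    (hu : ∀ x y t : ℝ, u x y t = Real.sqrt (6 * c) *
      (1 / Real.cosh (Real.sqrt (c / 2) * (C₁ - x - y + c * t)))) :
    ∀ x y t : ℝ,
      deriv (fun t' => u x y t') t
        + (u x y t) ^ 2 * deriv (fun x' => u x' y t) x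
        + deriv^[3] (fun x' => u x' y t) x
        + deriv^[2] (fun y' => deriv (fun x' => u x' y' t) x) y = 0 := by
  intro x y t
  set a : ℝ := Real.sqrt (6 * c) with hadef
  set k : ℝ := Real.sqrt (c / 2) with hkdef
  have ha : a ^ 2 = 6 * c := Real.sq_sqrt (by linarith)
  have hk : k ^ 2 = c / 2 := Real.sq_sqrt (by linarith)
  -- term 1
  have e1 : (fun t' => u x y t') = fun t' => a * (Real.cosh (k * (C₁ - x - y) + (k * c) * t'))⁻¹ := by
    funext t'; rw [hu, one_div]; ring_nf
  have T1 : deriv (fun t' => u x y t') t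
      = -(a * (k * c)) * Real.sinh (k * (C₁ - x - y) + (k * c) * t)
        / (Real.cosh (k * (C₁ - x - y) + (k * c) * t)) ^ 2 := by
    rw [e1]; exact (L1 a (k * (C₁ - x - y)) (k * c) t).deriv
  -- term 2 and 3 setup
  have e2 : (fun x' => u x' y t) = fun x' => a * (Real.cosh (k * (C₁ - y + c * t) + (-k) * x'))⁻¹ := by
    funext x'; rw [hu, one_div]; ring_nf
  have d1 : deriv (fun x' => a * (Real.cosh (k * (C₁ - y + c * t) + (-k) * x'))⁻¹)
      = fun x' => -(a * (-k)) * Real.sinh (k * (C₁ - y + c * t) + (-k) * x')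
        / (Real.cosh (k * (C₁ - y + c * t) + (-k) * x')) ^ 2 :=
    funext fun z => (L1 a (k * (C₁ - y + c * t)) (-k) z).deriv
  have T2 : deriv (fun x' => u x' y t) x
      = -(a * (-k)) * Real.sinh (k * (C₁ - y + c * t) + (-k) * x)
        / (Real.cosh (k * (C₁ - y + c * t) + (-k) * x)) ^ 2 := by
    rw [e2, d1]
  have d2 : deriv (fun x' => -(a * (-k)) * Real.sinh (k * (C₁ - y + c * t) + (-k) * x')
        / (Real.cosh (k * (C₁ - y + c * t) + (-k) * x')) ^ 2)
      = fun x' => -(a * (-k)) * (-k) * ((Real.cosh (k * (C₁ - y + c * t) + (-k) * x')) ^ 2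
          - 2 * (Real.sinh (k * (C₁ - y + c * t) + (-k) * x')) ^ 2)
        / (Real.cosh (k * (C₁ - y + c * t) + (-k) * x')) ^ 3 :=
    funext fun z => (L2 (-(a * (-k))) (k * (C₁ - y + c * t)) (-k) z).deriv
  have T3 : deriv^[3] (fun x' => u x' y t) x
      = -(a * (-k)) * (-k) * (-k) * Real.sinh (k * (C₁ - y + c * t) + (-k) * x)
        * (6 * (Real.sinh (k * (C₁ - y + c * t) + (-k) * x)) ^ 2
          - 5 * (Real.cosh (k * (C₁ - y + c * t) + (-k) * x)) ^ 2)
        / (Real.cosh (k * (C₁ - y + c * t) + (-k) * x)) ^ 4 := by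
    show deriv (deriv (deriv (fun x' => u x' y t))) x = _
    rw [e2, d1, d2]
    exact (L3 (-(a * (-k)) * (-k)) (k * (C₁ - y + c * t)) (-k) x).deriv
  -- term 4
  have e4 : (fun y' => deriv (fun x' => u x' y' t) x)
      = fun y' => (a * k) * Real.sinh (k * (C₁ - x + c * t) + (-k) * y')
        / (Real.cosh (k * (C₁ - x + c * t) + (-k) * y')) ^ 2 := by
    funext y'
    have e2' : (fun x' => u x' y' t)
        = fun x' => a * (Real.cosh (k * (C₁ - y' + c * t) + (-k) * x'))⁻¹ := by
      funext x'; rw [hu, one_div]; ring_nf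
    rw [e2', (L1 a (k * (C₁ - y' + c * t)) (-k) x).deriv]
    ring_nf
  have d4 : deriv (fun y' => (a * k) * Real.sinh (k * (C₁ - x + c * t) + (-k) * y')
        / (Real.cosh (k * (C₁ - x + c * t) + (-k) * y')) ^ 2)
      = fun y' => (a * k) * (-k) * ((Real.cosh (k * (C₁ - x + c * t) + (-k) * y')) ^ 2
          - 2 * (Real.sinh (k * (C₁ - x + c * t) + (-k) * y')) ^ 2)
        / (Real.cosh (k * (C₁ - x + c * t) + (-k) * y')) ^ 3 :=
    funext fun z => (L2 (a * k) (k * (C₁ - x + c * t)) (-k) z).deriv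
  have T4 : deriv^[2] (fun y' => deriv (fun x' => u x' y' t) x) y
      = (a * k) * (-k) * (-k) * Real.sinh (k * (C₁ - x + c * t) + (-k) * y)
        * (6 * (Real.sinh (k * (C₁ - x + c * t) + (-k) * y)) ^ 2
          - 5 * (Real.cosh (k * (C₁ - x + c * t) + (-k) * y)) ^ 2)
        / (Real.cosh (k * (C₁ - x + c * t) + (-k) * y)) ^ 4 := by
    show deriv (deriv (fun y' => deriv (fun x' => u x' y' t) x)) y = _
    rw [e4, d4]
    exact (L3 ((a * k) * (-k)) (k * (C₁ - x + c * t)) (-k) y).deriv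
  rw [T1, T2, T3, T4, hu]
  rw [show k * (C₁ - x - y) + (k * c) * t = k * (C₁ - x - y + c * t) from by ring,
      show k * (C₁ - y + c * t) + (-k) * x = k * (C₁ - x - y + c * t) from by ring,
      show k * (C₁ - x + c * t) + (-k) * y = k * (C₁ - x - y + c * t) from by ring]
  set S := Real.sinh (k * (C₁ - x - y + c * t)) with hS
  set C := Real.cosh (k * (C₁ - x - y + c * t)) with hC
  have hC0 : C ≠ 0 := (Real.cosh_pos _).ne'
  have hCS : C ^ 2 - S ^ 2 = 1 := Real.cosh_sq_sub_sinh_sq _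
  field_simp
  linear_combination (a * k * S) * ha + (2 * a * k * S * (6*S^2 - 5*C^2)) * hk + (-6*c*a*k*S) * hCS
end

section
/- For c > -1/8 and C₁ ∈ ℝ, the function u(x,y,t) = -1/4 - (√(3+24c)/4)·tanh((√(3+24c)/8)·(C₁ - x - y + ct)) satisfies u_t + u·u_x + 2u²·u_x - u_{xxx} - (1/3)·u_{xyy} = 0. -/
lemma tanh_hasDeriv (x : ℝ) : HasDerivAt Real.tanh (1 - Real.tanh x ^ 2) x := by
  have hc := Real.cosh_pos x
  have h := (Real.hasDerivAt_sinh x).div (Real.hasDerivAt_cosh x) hc.ne'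
  have heq : (Real.cosh x * Real.cosh x - Real.sinh x * Real.sinh x) / Real.cosh x ^ 2
      = 1 - Real.tanh x ^ 2 := by
    rw [Real.tanh_eq_sinh_div_cosh]
    have h1 : Real.cosh x ^ 2 - Real.sinh x ^ 2 = 1 := Real.cosh_sq_sub_sinh_sq x
    field_simp
  rw [heq] at h
  have hf : Real.tanh = fun y => Real.sinh y / Real.cosh y :=
    funext Real.tanh_eq_sinh_div_cosh
  exact hf ▸ h

lemma hasDerivAt_of_eq {f : ℝ → ℝ} {a b x : ℝ} (h : HasDerivAt f a x) (hab : a = b) :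
    HasDerivAt f b x := hab ▸ h

/-- The kink traveling-wave solution of the mZK equation with
A = 1, B = 2, M = -1, N = -1/3. -/
theorem stmt_13 (c C₁ : ℝ) (hc : -1/8 < c) (u : ℝ → ℝ → ℝ → ℝ)
    (hu : ∀ x y t : ℝ, u x y t = -1/4 - (Real.sqrt (3 + 24 * c) / 4) *
      Real.tanh ((Real.sqrt (3 + 24 * c) / 8) * (C₁ - x - y + c * t))) :
    ∀ x y t : ℝ,
      deriv (fun t' => u x y t') t
        + u x y t * deriv (fun x' => u x' y t) x
        + 2 * (u x y t) ^ 2 * deriv (fun x' => u x' y t) x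
        - deriv^[3] (fun x' => u x' y t) x
        - (1/3) * deriv^[2] (fun y' => deriv (fun x' => u x' y' t) x) y = 0 := by
  intro x y t
  have h3 : (0:ℝ) ≤ 3 + 24*c := by linarith
  set s := Real.sqrt (3 + 24 * c) with hsdef
  have hs : s^2 = 3 + 24*c := Real.sq_sqrt h3
  simp only [hu]
  have key : ∀ (g : ℝ → ℝ) (a w : ℝ), HasDerivAt g a w →
      HasDerivAt (fun v => Real.tanh (g v)) ((1 - Real.tanh (g w)^2) * a) w := by
    intro g a w hg
    exact (tanh_hasDeriv (g w)).comp w hg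
  have ix : ∀ (Y X : ℝ), HasDerivAt (fun v : ℝ => s/8*(C₁ - v - Y + c*t)) (-(s/8)) X := by
    intro Y X
    have h := ((((hasDerivAt_id X).const_sub C₁).sub_const Y).add_const (c*t)).const_mul (s/8)
    exact hasDerivAt_of_eq h (by ring)
  have iy : ∀ (Y : ℝ), HasDerivAt (fun v : ℝ => s/8*(C₁ - x - v + c*t)) (-(s/8)) Y := by
    intro Y
    have h := (((hasDerivAt_id Y).const_sub (C₁ - x)).add_const (c*t)).const_mul (s/8)
    exact hasDerivAt_of_eq h (by ring)
  have it : HasDerivAt (fun v : ℝ => s/8*(C₁ - x - y + c*v)) (s/8*c) t := by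
    have h := (((hasDerivAt_id t).const_mul c).const_add (C₁ - x - y)).const_mul (s/8)
    exact hasDerivAt_of_eq h (by ring)
  -- first x-derivative (parametrized in the y-slot for the mixed term)
  have d1x : ∀ (Y X : ℝ), HasDerivAt (fun x' => -1/4 - s/4 * Real.tanh (s/8*(C₁ - x' - Y + c*t)))
      (s^2/32 * (1 - Real.tanh (s/8*(C₁ - X - Y + c*t))^2)) X := by
    intro Y X
    have h := ((key _ _ X (ix Y X)).const_mul (s/4)).const_sub (-1/4)
    exact hasDerivAt_of_eq h (by ring)
  -- t-derivative
  have d1t : HasDerivAt (fun t' => -1/4 - s/4 * Real.tanh (s/8*(C₁ - x - y + c*t')))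
      (-(c*s^2/32) * (1 - Real.tanh (s/8*(C₁ - x - y + c*t))^2)) t := by
    have h := ((key _ _ t it).const_mul (s/4)).const_sub (-1/4)
    exact hasDerivAt_of_eq h (by ring)
  -- second x-derivative
  have d2x : ∀ X : ℝ, HasDerivAt (fun x' => s^2/32 * (1 - Real.tanh (s/8*(C₁ - x' - y + c*t))^2))
      (s^3/128 * Real.tanh (s/8*(C₁ - X - y + c*t)) * (1 - Real.tanh (s/8*(C₁ - X - y + c*t))^2)) X := by
    intro X
    have h0 := key _ _ X (ix y X)
    have h := ((h0.pow 2).const_sub 1).const_mul (s^2/32)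
    exact hasDerivAt_of_eq h (by push_cast; ring)
  -- third x-derivative
  have d3x : HasDerivAt
      (fun X => s^3/128 * Real.tanh (s/8*(C₁ - X - y + c*t)) * (1 - Real.tanh (s/8*(C₁ - X - y + c*t))^2))
      (-(s^4/1024) * (1 - Real.tanh (s/8*(C₁ - x - y + c*t))^2)
        * (1 - 3 * Real.tanh (s/8*(C₁ - x - y + c*t))^2)) x := by
    have h0 := key _ _ x (ix y x)
    have h := (h0.const_mul (s^3/128)).mul ((h0.pow 2).const_sub 1)
    exact hasDerivAt_of_eq h (by simp only [Pi.pow_apply]; push_cast; ring)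
  -- second y-derivative of the x-derivative function
  have d2y : ∀ Y : ℝ, HasDerivAt (fun y' => s^2/32 * (1 - Real.tanh (s/8*(C₁ - x - y' + c*t))^2))
      (s^3/128 * Real.tanh (s/8*(C₁ - x - Y + c*t)) * (1 - Real.tanh (s/8*(C₁ - x - Y + c*t))^2)) Y := by
    intro Y
    have h0 := key _ _ Y (iy Y)
    have h := ((h0.pow 2).const_sub 1).const_mul (s^2/32)
    exact hasDerivAt_of_eq h (by push_cast; ring)
  have d3y : HasDerivAt
      (fun Y => s^3/128 * Real.tanh (s/8*(C₁ - x - Y + c*t)) * (1 - Real.tanh (s/8*(C₁ - x - Y + c*t))^2))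
      (-(s^4/1024) * (1 - Real.tanh (s/8*(C₁ - x - y + c*t))^2)
        * (1 - 3 * Real.tanh (s/8*(C₁ - x - y + c*t))^2)) y := by
    have h0 := key _ _ y (iy y)
    have h := (h0.const_mul (s^3/128)).mul ((h0.pow 2).const_sub 1)
    exact hasDerivAt_of_eq h (by simp only [Pi.pow_apply]; push_cast; ring)
  -- rewrite the iterated derivatives
  have e1 : deriv (fun x' => -1/4 - s/4 * Real.tanh (s/8*(C₁ - x' - y + c*t)))
      = fun X => s^2/32 * (1 - Real.tanh (s/8*(C₁ - X - y + c*t))^2) :=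
    funext fun X => (d1x y X).deriv
  have e2 : deriv (fun X => s^2/32 * (1 - Real.tanh (s/8*(C₁ - X - y + c*t))^2))
      = fun X => s^3/128 * Real.tanh (s/8*(C₁ - X - y + c*t))
          * (1 - Real.tanh (s/8*(C₁ - X - y + c*t))^2) :=
    funext fun X => (d2x X).deriv
  have e3 : deriv^[3] (fun x' => -1/4 - s/4 * Real.tanh (s/8*(C₁ - x' - y + c*t))) x
      = -(s^4/1024) * (1 - Real.tanh (s/8*(C₁ - x - y + c*t))^2)
        * (1 - 3 * Real.tanh (s/8*(C₁ - x - y + c*t))^2) := by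
    have : deriv^[3] (fun x' => -1/4 - s/4 * Real.tanh (s/8*(C₁ - x' - y + c*t))) x
        = deriv (deriv (deriv (fun x' => -1/4 - s/4 * Real.tanh (s/8*(C₁ - x' - y + c*t))))) x := rfl
    rw [this, e1, e2, d3x.deriv]
  have m1 : (fun y' => deriv (fun x' => -1/4 - s/4 * Real.tanh (s/8*(C₁ - x' - y' + c*t))) x)
      = fun y' => s^2/32 * (1 - Real.tanh (s/8*(C₁ - x - y' + c*t))^2) :=
    funext fun Y => (d1x Y x).deriv
  have m2 : deriv (fun y' => s^2/32 * (1 - Real.tanh (s/8*(C₁ - x - y' + c*t))^2))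
      = fun Y => s^3/128 * Real.tanh (s/8*(C₁ - x - Y + c*t))
          * (1 - Real.tanh (s/8*(C₁ - x - Y + c*t))^2) :=
    funext fun Y => (d2y Y).deriv
  have e4 : deriv^[2] (fun y' => deriv (fun x' => -1/4 - s/4 * Real.tanh (s/8*(C₁ - x' - y' + c*t))) x) y
      = -(s^4/1024) * (1 - Real.tanh (s/8*(C₁ - x - y + c*t))^2)
        * (1 - 3 * Real.tanh (s/8*(C₁ - x - y + c*t))^2) := by
    have h0 : deriv^[2] (fun y' => deriv (fun x' => -1/4 - s/4 * Real.tanh (s/8*(C₁ - x' - y' + c*t))) x) y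
        = deriv (deriv (fun y' => deriv (fun x' => -1/4 - s/4 * Real.tanh (s/8*(C₁ - x' - y' + c*t))) x)) y := rfl
    rw [h0, m1, m2, d3y.deriv]
  rw [d1t.deriv, (d1x y x).deriv, e3, e4]
  linear_combination ((1 - Real.tanh (s/8*(C₁ - x - y + c*t))^2) * s^2 / 768) * hs
end

section
/- The quartic polynomial B·z⁴ + 2A·z³ - 6c·z² - C₂·z + C₃ with B ≠ 0, C₂ = (A(A² + 6Bc) + √((A² + 4Bc)³))/B², C₃ = -(A²(A² + 6Bc) + A·√((A² + 4Bc)³) + 6B²c²)/(2B³), and A² + 4Bc > 0, factors as B·(z - φ₁)³·(z - φ₂), where φ₁ = -(A + √(A² + 4Bc))/(2B) and φ₂ = -(A - 3√(A² + 4Bc))/(2B), and φ₁ ≠ φ₂. -/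
/-- The triple-root case in the classification of the quartic polynomial P(z)
governing traveling-wave solutions of the mZK equation. -/
theorem stmt_15 (A B c C₂ C₃ φ₁ φ₂ : ℝ) (hB : B ≠ 0)
    (hdisc : 0 < A ^ 2 + 4 * B * c)
    (hC₂ : C₂ = (A * (A ^ 2 + 6 * B * c) + Real.sqrt ((A ^ 2 + 4 * B * c) ^ 3)) / B ^ 2)
    (hC₃ : C₃ = -(A ^ 2 * (A ^ 2 + 6 * B * c) + A * Real.sqrt ((A ^ 2 + 4 * B * c) ^ 3)
      + 6 * B ^ 2 * c ^ 2) / (2 * B ^ 3))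
    (hφ₁ : φ₁ = -(A + Real.sqrt (A ^ 2 + 4 * B * c)) / (2 * B))
    (hφ₂ : φ₂ = -(A - 3 * Real.sqrt (A ^ 2 + 4 * B * c)) / (2 * B)) :
    (∀ z : ℝ,
      B * z ^ 4 + 2 * A * z ^ 3 - 6 * c * z ^ 2 - C₂ * z + C₃
        = B * (z - φ₁) ^ 3 * (z - φ₂)) ∧ φ₁ ≠ φ₂ := by
  set s := Real.sqrt (A ^ 2 + 4 * B * c) with hs
  have hs2 : s ^ 2 = A ^ 2 + 4 * B * c := Real.sq_sqrt hdisc.le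
  have hspos : 0 < s := Real.sqrt_pos.mpr hdisc
  have hcube : Real.sqrt ((A ^ 2 + 4 * B * c) ^ 3) = s ^ 3 := by
    rw [show (A ^ 2 + 4 * B * c) ^ 3 = (s ^ 3) ^ 2 by rw [← hs2]; ring]
    exact Real.sqrt_sq (by positivity)
  constructor
  · intro z
    rw [hC₂, hC₃, hφ₁, hφ₂, hcube]
    field_simp
    linear_combination (24*B*z*A + 24*B^2*z^2 + 3*s^2 + 9*A^2 + 12*B*c) * hs2
  · rw [hφ₁, hφ₂]
    rw [ne_eq, div_eq_div_iff (by simpa using hB) (by simpa using hB)]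
    intro h
    have hsB : s * B = 0 := by linear_combination (-1/8 : ℝ) * h
    rcases mul_eq_zero.mp hsB with h' | h'
    · exact hspos.ne' h'
    · exact hB h'
end

section
/- Let B ≠ 0, A² + 4Bc > 0, K = -6(M+N)/B, φ₁ = -(A + √(A² + 4Bc))/(2B), φ₂ = -(A - 3√(A² + 4Bc))/(2B). Then v(r) = φ₁ + (φ₂ - φ₁)/(1 - ((φ₂ - φ₁)²/(4K))·(C₁ - r)²) satisfies -c·v' + A·v·v' + B·v²·v' + (M+N)·v''' = 0 wherever the denominator is nonzero. -/
/-- The algebraically decaying solution corresponding to the triple-root case of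
the quartic polynomial P. -/
theorem stmt_16 (A B M N c C₁ K φ₁ φ₂ : ℝ) (hB : B ≠ 0) (hMN : M + N ≠ 0)
    (hdisc : 0 < A ^ 2 + 4 * B * c)
    (hK : K = -6 * (M + N) / B)
    (hφ₁ : φ₁ = -(A + Real.sqrt (A ^ 2 + 4 * B * c)) / (2 * B))
    (hφ₂ : φ₂ = -(A - 3 * Real.sqrt (A ^ 2 + 4 * B * c)) / (2 * B))
    (v : ℝ → ℝ)
    (hvdef : ∀ r : ℝ, v r = φ₁ + (φ₂ - φ₁) /
      (1 - ((φ₂ - φ₁) ^ 2 / (4 * K)) * (C₁ - r) ^ 2)) :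
    ∀ r : ℝ, 1 - ((φ₂ - φ₁) ^ 2 / (4 * K)) * (C₁ - r) ^ 2 ≠ 0 →
      -c * deriv v r + A * v r * deriv v r + B * (v r) ^ 2 * deriv v r
        + (M + N) * deriv^[3] v r = 0 := by
  set s := Real.sqrt (A ^ 2 + 4 * B * c) with hs
  have hs2 : s ^ 2 = A ^ 2 + 4 * B * c := Real.sq_sqrt hdisc.le
  clear_value s
  set a := φ₂ - φ₁ with ha
  set k := a ^ 2 / (4 * K) with hk
  clear_value a k
  -- scalar facts
  have hKne : K ≠ 0 := by
    rw [hK]; exact div_ne_zero (by simpa using hMN) hB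
  have haB : a * B = 2 * s := by
    rw [ha, hφ₁, hφ₂]; field_simp; ring
  have hroot : B * φ₁ ^ 2 + A * φ₁ - c = 0 := by
    rw [hφ₁]; field_simp; linear_combination hs2
  have hA2B : A + 2 * B * φ₁ = -s := by
    rw [hφ₁]; field_simp; ring
  have hmk : 24 * (M + N) * k = -(a ^ 2 * B) := by
    rw [hk, hK]; field_simp; ring
  -- derivative machinery
  have hden : ∀ x : ℝ, HasDerivAt (fun y : ℝ => 1 - k * (C₁ - y) ^ 2)
      (2 * k * (C₁ - x)) x := by
    intro x
    have h1 : HasDerivAt (fun y : ℝ => C₁ - y) (-1) x := (hasDerivAt_id x).const_sub C₁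
    have h2 := ((h1.pow 2).const_mul k).const_sub 1
    refine HasDerivAt.congr_deriv h2 ?_
    push_cast; ring
  have hvfun : v = fun y => φ₁ + a / (1 - k * (C₁ - y) ^ 2) := funext hvdef
  set S : Set ℝ := {x : ℝ | 1 - k * (C₁ - x) ^ 2 ≠ 0} with hS
  have hSopen : IsOpen S := isOpen_ne_fun (by continuity) continuous_const
  have hder1 : ∀ x ∈ S, HasDerivAt v
      (-2 * a * k * (C₁ - x) / (1 - k * (C₁ - x) ^ 2) ^ 2) x := by
    intro x hx
    rw [hvfun]
    have h := ((hasDerivAt_const x a).div (hden x) hx).const_add φ₁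
    refine HasDerivAt.congr_deriv h ?_
    ring
  have hder2 : ∀ x ∈ S, HasDerivAt
      (fun x => -2 * a * k * (C₁ - x) / (1 - k * (C₁ - x) ^ 2) ^ 2)
      (2 * a * k * (1 + 3 * k * (C₁ - x) ^ 2) / (1 - k * (C₁ - x) ^ 2) ^ 3) x := by
    intro x hx
    replace hx : 1 - k * (C₁ - x) ^ 2 ≠ 0 := hx
    have h1 : HasDerivAt (fun y : ℝ => C₁ - y) (-1) x := (hasDerivAt_id x).const_sub C₁
    have hnum : HasDerivAt (fun y : ℝ => -2 * a * k * (C₁ - y)) (2 * a * k) x := by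
      have h2 := h1.const_mul (-2 * a * k)
      refine HasDerivAt.congr_deriv h2 ?_; ring
    have h := hnum.div ((hden x).pow 2) (pow_ne_zero 2 hx)
    refine HasDerivAt.congr_deriv h ?_
    push_cast
    simp only [Pi.pow_apply]
    field_simp
    ring
  have hder3 : ∀ x ∈ S, HasDerivAt
      (fun x => 2 * a * k * (1 + 3 * k * (C₁ - x) ^ 2) / (1 - k * (C₁ - x) ^ 2) ^ 3)
      (-24 * a * k ^ 2 * (C₁ - x) * (1 + k * (C₁ - x) ^ 2) / (1 - k * (C₁ - x) ^ 2) ^ 4) x := by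
    intro x hx
    replace hx : 1 - k * (C₁ - x) ^ 2 ≠ 0 := hx
    have h1 : HasDerivAt (fun y : ℝ => C₁ - y) (-1) x := (hasDerivAt_id x).const_sub C₁
    have hnum : HasDerivAt (fun y : ℝ => 2 * a * k * (1 + 3 * k * (C₁ - y) ^ 2))
        (-12 * a * k ^ 2 * (C₁ - x)) x := by
      have h2 := (((h1.pow 2).const_mul (3 * k)).const_add 1).const_mul (2 * a * k)
      refine HasDerivAt.congr_deriv h2 ?_
      push_cast; ring
    have h := hnum.div ((hden x).pow 3) (pow_ne_zero 3 hx)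
    refine HasDerivAt.congr_deriv h ?_
    push_cast
    simp only [Pi.pow_apply]
    field_simp
    ring
  have hd1eq : ∀ x ∈ S, deriv v x
      = -2 * a * k * (C₁ - x) / (1 - k * (C₁ - x) ^ 2) ^ 2 :=
    fun x hx => (hder1 x hx).deriv
  have hd2eq : ∀ x ∈ S, deriv (deriv v) x
      = 2 * a * k * (1 + 3 * k * (C₁ - x) ^ 2) / (1 - k * (C₁ - x) ^ 2) ^ 3 := by
    intro x hx
    have hEv : deriv v =ᶠ[nhds x]
        (fun x => -2 * a * k * (C₁ - x) / (1 - k * (C₁ - x) ^ 2) ^ 2) :=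
      Filter.eventuallyEq_of_mem (hSopen.mem_nhds hx) hd1eq
    rw [hEv.deriv_eq, (hder2 x hx).deriv]
  intro r hr
  have hrS : r ∈ S := hr
  have hd3eq : deriv^[3] v r
      = -24 * a * k ^ 2 * (C₁ - r) * (1 + k * (C₁ - r) ^ 2) / (1 - k * (C₁ - r) ^ 2) ^ 4 := by
    have hEv : deriv (deriv v) =ᶠ[nhds r]
        (fun x => 2 * a * k * (1 + 3 * k * (C₁ - x) ^ 2) / (1 - k * (C₁ - x) ^ 2) ^ 3) :=
      Filter.eventuallyEq_of_mem (hSopen.mem_nhds hrS) hd2eq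
    show deriv (deriv (deriv v)) r = _
    rw [hEv.deriv_eq, (hder3 r hrS).deriv]
  rw [hd3eq, hd1eq r hrS, hvdef r]
  set u := C₁ - r with hu
  set d := 1 - k * u ^ 2 with hd
  have hdne : d ≠ 0 := hr
  clear_value u d
  field_simp
  linear_combination ((-2*a*k*u*d^2)) * hroot + ((-2*a^2*k*u*d)) * hA2B
    + ((-(a^2*k*u*d))) * haB + ((-(a*k*u*(1+k*u^2)))) * hmk
    + ((a^3*B*k*u)) * hd
end

section
/- Let λ > 0 and A² - 6Bλ(M+N) > 0, and c = -λ(M+N), M + N ≠ 0. Then u(x,y,t) = -6λ(M+N)/(√(A² - 6Bλ(M+N))·cos(√λ·(x + y - ct)) + A) satisfies u_t + A·u·u_x + B·u²·u_x + M·u_{xxx} + N·u_{xyy} = 0 wherever defined. -/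
-- derivative of the denominator
private lemma mzk_hD (s A r : ℝ) (w : ℝ) :
    HasDerivAt (fun v => s * Real.cos (r * v) + A) (-(s * r * Real.sin (r * w))) w := by
  have h1 : HasDerivAt (fun v : ℝ => r * v) r w := by
    simpa using (hasDerivAt_id w).const_mul r
  have h2 : HasDerivAt (fun v : ℝ => Real.cos (r * v)) (-Real.sin (r * w) * r) w := by
    simpa [Function.comp_def] using (Real.hasDerivAt_cos (r * w)).comp w h1
  have h3 := (h2.const_mul s).add_const A
  refine h3.congr_deriv ?_
  ring

private lemma mzk_hsin (s A r K : ℝ) (w : ℝ) :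
    HasDerivAt (fun v => K * s * r * Real.sin (r * v)) (K * s * r * (Real.cos (r * w) * r)) w := by
  have h1 : HasDerivAt (fun v : ℝ => r * v) r w := by
    simpa using (hasDerivAt_id w).const_mul r
  have h2 : HasDerivAt (fun v : ℝ => Real.sin (r * v)) (Real.cos (r * w) * r) w := by
    simpa [Function.comp_def] using (Real.hasDerivAt_sin (r * w)).comp w h1
  simpa using h2.const_mul (K * s * r)

private lemma mzk_hF (K s A r : ℝ) (w : ℝ) (hw : s * Real.cos (r * w) + A ≠ 0) :
    HasDerivAt (fun v => K / (s * Real.cos (r * v) + A))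
      (K * s * r * Real.sin (r * w) / (s * Real.cos (r * w) + A) ^ 2) w := by
  have h := (hasDerivAt_const w K).div (mzk_hD s A r w) hw
  refine h.congr_deriv ?_
  field_simp
  ring

private lemma mzk_hF1 (K s A r : ℝ) (w : ℝ) (hw : s * Real.cos (r * w) + A ≠ 0) :
    HasDerivAt (fun v => K * s * r * Real.sin (r * v) / (s * Real.cos (r * v) + A) ^ 2)
      (K * s * r ^ 2 * (Real.cos (r * w) * (s * Real.cos (r * w) + A)
          + 2 * s * Real.sin (r * w) ^ 2) / (s * Real.cos (r * w) + A) ^ 3) w := by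
  have hden : HasDerivAt (fun v => (s * Real.cos (r * v) + A) ^ 2)
      (2 * (s * Real.cos (r * w) + A) ^ 1 * (-(s * r * Real.sin (r * w)))) w :=
    (mzk_hD s A r w).pow 2
  have h := (mzk_hsin s A r K w).div hden (pow_ne_zero 2 hw)
  refine h.congr_deriv ?_
  field_simp
  ring

private lemma mzk_hF2 (K s A r : ℝ) (w : ℝ) (hw : s * Real.cos (r * w) + A ≠ 0) :
    HasDerivAt (fun v => K * s * r ^ 2 * (Real.cos (r * v) * (s * Real.cos (r * v) + A)
          + 2 * s * Real.sin (r * v) ^ 2) / (s * Real.cos (r * v) + A) ^ 3)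
      (K * s * r ^ 3 * Real.sin (r * w) *
          (-(s * Real.cos (r * w) + A) ^ 2
            + 6 * s * Real.cos (r * w) * (s * Real.cos (r * w) + A)
            + 6 * s ^ 2 * Real.sin (r * w) ^ 2) / (s * Real.cos (r * w) + A) ^ 4) w := by
  have h1 : HasDerivAt (fun v : ℝ => r * v) r w := by
    simpa using (hasDerivAt_id w).const_mul r
  have hcos : HasDerivAt (fun v : ℝ => Real.cos (r * v)) (-Real.sin (r * w) * r) w := by
    simpa [Function.comp_def] using (Real.hasDerivAt_cos (r * w)).comp w h1
  have hsin : HasDerivAt (fun v : ℝ => Real.sin (r * v)) (Real.cos (r * w) * r) w := by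
    simpa [Function.comp_def] using (Real.hasDerivAt_sin (r * w)).comp w h1
  have hsin2 : HasDerivAt (fun v : ℝ => Real.sin (r * v) ^ 2)
      (2 * Real.sin (r * w) ^ 1 * (Real.cos (r * w) * r)) w := hsin.pow 2
  have hnum : HasDerivAt (fun v => K * s * r ^ 2 * (Real.cos (r * v) * (s * Real.cos (r * v) + A)
          + 2 * s * Real.sin (r * v) ^ 2))
      (K * s * r ^ 2 * ((-Real.sin (r * w) * r * (s * Real.cos (r * w) + A)
          + Real.cos (r * w) * (-(s * r * Real.sin (r * w))))
          + 2 * s * (2 * Real.sin (r * w) ^ 1 * (Real.cos (r * w) * r)))) w := by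
    exact ((hcos.mul (mzk_hD s A r w)).add ((hsin2.const_mul (2 * s)))).const_mul (K * s * r ^ 2)
  have hden : HasDerivAt (fun v => (s * Real.cos (r * v) + A) ^ 3)
      (3 * (s * Real.cos (r * w) + A) ^ 2 * (-(s * r * Real.sin (r * w)))) w :=
    (mzk_hD s A r w).pow 3
  have h := hnum.div hden (pow_ne_zero 3 hw)
  refine h.congr_deriv ?_
  field_simp
  ring

private lemma mzk_d3 (K s A r : ℝ) (w : ℝ) (hw : s * Real.cos (r * w) + A ≠ 0) :
    deriv^[3] (fun v => K / (s * Real.cos (r * v) + A)) w =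
      K * s * r ^ 3 * Real.sin (r * w) *
          (-(s * Real.cos (r * w) + A) ^ 2
            + 6 * s * Real.cos (r * w) * (s * Real.cos (r * w) + A)
            + 6 * s ^ 2 * Real.sin (r * w) ^ 2) / (s * Real.cos (r * w) + A) ^ 4 := by
  have hcont : Continuous (fun v => s * Real.cos (r * v) + A) := by fun_prop
  have hopen : ∀ z : ℝ, s * Real.cos (r * z) + A ≠ 0 →
      ∀ᶠ v in nhds z, s * Real.cos (r * v) + A ≠ 0 :=
    fun z hz => hcont.continuousAt.eventually_ne hz
  have e1 : ∀ z : ℝ, s * Real.cos (r * z) + A ≠ 0 →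
      deriv (fun v => K / (s * Real.cos (r * v) + A)) z =
        K * s * r * Real.sin (r * z) / (s * Real.cos (r * z) + A) ^ 2 :=
    fun z hz => (mzk_hF K s A r z hz).deriv
  have e2 : ∀ z : ℝ, s * Real.cos (r * z) + A ≠ 0 →
      deriv (deriv (fun v => K / (s * Real.cos (r * v) + A))) z =
        K * s * r ^ 2 * (Real.cos (r * z) * (s * Real.cos (r * z) + A)
          + 2 * s * Real.sin (r * z) ^ 2) / (s * Real.cos (r * z) + A) ^ 3 := by
    intro z hz
    have hev : deriv (fun v => K / (s * Real.cos (r * v) + A)) =ᶠ[nhds z]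
        fun v => K * s * r * Real.sin (r * v) / (s * Real.cos (r * v) + A) ^ 2 :=
      (hopen z hz).mono fun v hv => e1 v hv
    rw [hev.deriv_eq]
    exact (mzk_hF1 K s A r z hz).deriv
  have e3 : deriv (deriv (deriv (fun v => K / (s * Real.cos (r * v) + A)))) w =
      K * s * r ^ 3 * Real.sin (r * w) *
          (-(s * Real.cos (r * w) + A) ^ 2
            + 6 * s * Real.cos (r * w) * (s * Real.cos (r * w) + A)
            + 6 * s ^ 2 * Real.sin (r * w) ^ 2) / (s * Real.cos (r * w) + A) ^ 4 := by
    have hev : deriv (deriv (fun v => K / (s * Real.cos (r * v) + A))) =ᶠ[nhds w]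
        fun v => K * s * r ^ 2 * (Real.cos (r * v) * (s * Real.cos (r * v) + A)
          + 2 * s * Real.sin (r * v) ^ 2) / (s * Real.cos (r * v) + A) ^ 3 :=
      (hopen w hw).mono fun v hv => e2 v hv
    rw [hev.deriv_eq]
    exact (mzk_hF2 K s A r w hw).deriv
  simpa [Function.iterate_succ_apply', Function.iterate_zero_apply] using e3

private lemma mzk_iter_shift : ∀ (n : ℕ) (f : ℝ → ℝ) (a x : ℝ),
    deriv^[n] (fun z => f (z + a)) x = deriv^[n] f (x + a)
  | 0, f, a, x => rfl
  | (n+1), f, a, x => by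
    rw [Function.iterate_succ_apply, Function.iterate_succ_apply]
    have h : deriv (fun z => f (z + a)) = fun z => deriv f (z + a) :=
      funext fun z => deriv_comp_add_const f a z
    rw [h, mzk_iter_shift n (deriv f) a x]

private lemma mzk_algebra (K A B M N lam c s r sn cs : ℝ)
    (hden : s * cs + A ≠ 0)
    (hK : K = -6 * lam * (M + N))
    (hc : c = -lam * (M + N))
    (hr2 : r ^ 2 = lam)
    (hs2 : s ^ 2 = A ^ 2 - 6 * B * lam * (M + N))
    (hpyth : sn ^ 2 + cs ^ 2 = 1) :
    K * s * r * sn / (s * cs + A) ^ 2 * -c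
      + A * (K / (s * cs + A)) * (K * s * r * sn / (s * cs + A) ^ 2)
      + B * (K / (s * cs + A)) ^ 2 * (K * s * r * sn / (s * cs + A) ^ 2)
      + M * (K * s * r ^ 3 * sn * (-(s * cs + A) ^ 2 + 6 * s * cs * (s * cs + A)
            + 6 * s ^ 2 * sn ^ 2) / (s * cs + A) ^ 4)
      + N * (K * s * r ^ 3 * sn * (-(s * cs + A) ^ 2 + 6 * s * cs * (s * cs + A)
            + 6 * s ^ 2 * sn ^ 2) / (s * cs + A) ^ 4) = 0 := by
  subst hK hc
  have hP : -(-lam * (M + N)) * (s * cs + A) ^ 2 + A * (-6 * lam * (M + N)) * (s * cs + A)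
      + B * (-6 * lam * (M + N)) ^ 2
      + (M + N) * r ^ 2 * (-(s * cs + A) ^ 2 + 6 * s * cs * (s * cs + A)
          + 6 * s ^ 2 * sn ^ 2) = 0 := by
    linear_combination ((M + N) * (-(s * cs + A) ^ 2 + 6 * s * cs * (s * cs + A)
        + 6 * s ^ 2 * sn ^ 2)) * hr2 + (6 * lam * (M + N) * s ^ 2) * hpyth
      + (6 * lam * (M + N)) * hs2
  calc (-6 * lam * (M + N)) * s * r * sn / (s * cs + A) ^ 2 * -(-lam * (M + N))
      + A * ((-6 * lam * (M + N)) / (s * cs + A)) * ((-6 * lam * (M + N)) * s * r * sn / (s * cs + A) ^ 2)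
      + B * ((-6 * lam * (M + N)) / (s * cs + A)) ^ 2 * ((-6 * lam * (M + N)) * s * r * sn / (s * cs + A) ^ 2)
      + M * ((-6 * lam * (M + N)) * s * r ^ 3 * sn * (-(s * cs + A) ^ 2 + 6 * s * cs * (s * cs + A)
            + 6 * s ^ 2 * sn ^ 2) / (s * cs + A) ^ 4)
      + N * ((-6 * lam * (M + N)) * s * r ^ 3 * sn * (-(s * cs + A) ^ 2 + 6 * s * cs * (s * cs + A)
            + 6 * s ^ 2 * sn ^ 2) / (s * cs + A) ^ 4)
      = (-6 * lam * (M + N)) * s * r * sn / (s * cs + A) ^ 4 *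
          (-(-lam * (M + N)) * (s * cs + A) ^ 2 + A * (-6 * lam * (M + N)) * (s * cs + A)
            + B * (-6 * lam * (M + N)) ^ 2
            + (M + N) * r ^ 2 * (-(s * cs + A) ^ 2 + 6 * s * cs * (s * cs + A)
                + 6 * s ^ 2 * sn ^ 2)) := by
        field_simp
        ring
    _ = 0 := by rw [hP, mul_zero]

/-- The periodic solution of the mZK equation (Iqbal et al., Case 1), with wave
speed c = -λ(M+N). -/
theorem stmt_17 (A B M N lam c : ℝ) (hlam : 0 < lam) (hMN : M + N ≠ 0)
    (hdisc : 0 < A ^ 2 - 6 * B * lam * (M + N))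
    (hc : c = -lam * (M + N))
    (u : ℝ → ℝ → ℝ → ℝ)
    (hu : ∀ x y t : ℝ, u x y t = -6 * lam * (M + N) /
      (Real.sqrt (A ^ 2 - 6 * B * lam * (M + N)) *
        Real.cos (Real.sqrt lam * (x + y - c * t)) + A)) :
    ∀ x y t : ℝ,
      Real.sqrt (A ^ 2 - 6 * B * lam * (M + N)) *
        Real.cos (Real.sqrt lam * (x + y - c * t)) + A ≠ 0 →
      deriv (fun t' => u x y t') t
        + A * u x y t * deriv (fun x' => u x' y t) x
        + B * (u x y t) ^ 2 * deriv (fun x' => u x' y t) x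
        + M * deriv^[3] (fun x' => u x' y t) x
        + N * deriv^[2] (fun y' => deriv (fun x' => u x' y' t) x) y = 0 := by
  intro x y t hden
  set s : ℝ := Real.sqrt (A ^ 2 - 6 * B * lam * (M + N)) with hsdef
  set r : ℝ := Real.sqrt lam with hrdef
  have hr2 : r ^ 2 = lam := by rw [hrdef]; exact Real.sq_sqrt hlam.le
  have hs2 : s ^ 2 = A ^ 2 - 6 * B * lam * (M + N) := by
    rw [hsdef]; exact Real.sq_sqrt hdisc.le
  -- the x-profile at fixed (y, t)
  have hxfun : ∀ y' : ℝ, (fun x' => u x' y' t)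
      = fun x' => -6 * lam * (M + N) / (s * Real.cos (r * (x' + (y' - c * t))) + A) := by
    intro y'
    funext x'
    rw [hu, add_sub_assoc]
  -- t-derivative
  have dt : deriv (fun t' => u x y t') t =
      -6 * lam * (M + N) * s * r * Real.sin (r * (x + y - c * t)) /
        (s * Real.cos (r * (x + y - c * t)) + A) ^ 2 * -c := by
    have hinner : HasDerivAt (fun t' : ℝ => x + y - c * t') (-c) t := by
      simpa using ((hasDerivAt_id t).const_mul c).const_sub (x + y)
    have htfun : (fun t' => u x y t')
        = (fun v => -6 * lam * (M + N) / (s * Real.cos (r * v) + A)) ∘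
            (fun t' : ℝ => x + y - c * t') := by
      funext t'
      rw [hu]
      rfl
    rw [htfun]
    exact ((mzk_hF (-6 * lam * (M + N)) s A r (x + y - c * t) hden).comp t hinner).deriv
  -- x-derivative
  have dx : deriv (fun x' => u x' y t) x =
      -6 * lam * (M + N) * s * r * Real.sin (r * (x + y - c * t)) /
        (s * Real.cos (r * (x + y - c * t)) + A) ^ 2 := by
    rw [hxfun y]
    rw [show deriv (fun x' => -6 * lam * (M + N) /
          (s * Real.cos (r * (x' + (y - c * t))) + A)) x
        = deriv (fun v => -6 * lam * (M + N) / (s * Real.cos (r * v) + A))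
            (x + (y - c * t)) from
      deriv_comp_add_const (fun v => -6 * lam * (M + N) / (s * Real.cos (r * v) + A))
        (y - c * t) x]
    rw [show x + (y - c * t) = x + y - c * t from by ring]
    exact (mzk_hF (-6 * lam * (M + N)) s A r (x + y - c * t) hden).deriv
  -- third x-derivative
  have d3 : deriv^[3] (fun x' => u x' y t) x =
      -6 * lam * (M + N) * s * r ^ 3 * Real.sin (r * (x + y - c * t)) *
          (-(s * Real.cos (r * (x + y - c * t)) + A) ^ 2
            + 6 * s * Real.cos (r * (x + y - c * t)) * (s * Real.cos (r * (x + y - c * t)) + A)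
            + 6 * s ^ 2 * Real.sin (r * (x + y - c * t)) ^ 2) /
          (s * Real.cos (r * (x + y - c * t)) + A) ^ 4 := by
    rw [hxfun y]
    rw [show deriv^[3] (fun x' => -6 * lam * (M + N) /
          (s * Real.cos (r * (x' + (y - c * t))) + A)) x
        = deriv^[3] (fun v => -6 * lam * (M + N) / (s * Real.cos (r * v) + A))
            (x + (y - c * t)) from
      mzk_iter_shift 3 (fun v => -6 * lam * (M + N) / (s * Real.cos (r * v) + A))
        (y - c * t) x]
    rw [show x + (y - c * t) = x + y - c * t from by ring]
    exact mzk_d3 (-6 * lam * (M + N)) s A r (x + y - c * t) hden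
  -- mixed derivative
  have d2 : deriv^[2] (fun y' => deriv (fun x' => u x' y' t) x) y =
      -6 * lam * (M + N) * s * r ^ 3 * Real.sin (r * (x + y - c * t)) *
          (-(s * Real.cos (r * (x + y - c * t)) + A) ^ 2
            + 6 * s * Real.cos (r * (x + y - c * t)) * (s * Real.cos (r * (x + y - c * t)) + A)
            + 6 * s ^ 2 * Real.sin (r * (x + y - c * t)) ^ 2) /
          (s * Real.cos (r * (x + y - c * t)) + A) ^ 4 := by
    have hyfun : (fun y' => deriv (fun x' => u x' y' t) x)
        = fun y' => deriv (fun v => -6 * lam * (M + N) / (s * Real.cos (r * v) + A))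
            (y' + (x - c * t)) := by
      funext y'
      rw [hxfun y']
      rw [show deriv (fun x' => -6 * lam * (M + N) /
            (s * Real.cos (r * (x' + (y' - c * t))) + A)) x
          = deriv (fun v => -6 * lam * (M + N) / (s * Real.cos (r * v) + A))
              (x + (y' - c * t)) from
        deriv_comp_add_const (fun v => -6 * lam * (M + N) / (s * Real.cos (r * v) + A))
          (y' - c * t) x]
      rw [show x + (y' - c * t) = y' + (x - c * t) from by ring]
    rw [hyfun]
    rw [show deriv^[2] (fun y' => deriv
          (fun v => -6 * lam * (M + N) / (s * Real.cos (r * v) + A)) (y' + (x - c * t))) y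
        = deriv^[2] (deriv (fun v => -6 * lam * (M + N) / (s * Real.cos (r * v) + A)))
            (y + (x - c * t)) from
      mzk_iter_shift 2 (deriv (fun v => -6 * lam * (M + N) / (s * Real.cos (r * v) + A)))
        (x - c * t) y]
    rw [show y + (x - c * t) = x + y - c * t from by ring]
    rw [← Function.iterate_succ_apply]
    exact mzk_d3 (-6 * lam * (M + N)) s A r (x + y - c * t) hden
  rw [dt, dx, d3, d2, hu]
  exact mzk_algebra (-6 * lam * (M + N)) A B M N lam c s r
    (Real.sin (r * (x + y - c * t))) (Real.cos (r * (x + y - c * t)))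
    hden rfl hc hr2 hs2 (Real.sin_sq_add_cos_sq _)
end

section
/- Let B(M+N) < 0, λ = A²/(6B(M+N)) (so λ < 0), and c = -A²/(6B). Then u(x,y,t) = -(A/(2B))·(1 + coth(√(-λ)·(x+y-ct)) + csch(√(-λ)·(x+y-ct))) satisfies u_t + A·u·u_x + B·u²·u_x + M·u_{xxx} + N·u_{xyy} = 0 wherever defined. -/
noncomputable def mzkF (A B z : ℝ) : ℝ :=
  -(A / (2 * B)) * (1 + Real.cosh z / Real.sinh z + 1 / Real.sinh z)

noncomputable def mzkF1 (A B z : ℝ) : ℝ :=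
  -(A / (2 * B)) * (-(1 + Real.cosh z) / Real.sinh z ^ 2)

noncomputable def mzkF2 (A B z : ℝ) : ℝ :=
  -(A / (2 * B)) * ((1 + Real.cosh z) ^ 2 / Real.sinh z ^ 3)

noncomputable def mzkF3 (A B z : ℝ) : ℝ :=
  -(A / (2 * B)) * (-((1 + Real.cosh z) ^ 2 * (Real.cosh z + 2)) / Real.sinh z ^ 4)

lemma mzk_hF1_s18 (A B : ℝ) : ∀ z : ℝ, Real.sinh z ≠ 0 →
    HasDerivAt (mzkF A B) (mzkF1 A B z) z := by
  intro z hz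
  have h1 : HasDerivAt (fun w => Real.cosh w / Real.sinh w)
      ((Real.sinh z * Real.sinh z - Real.cosh z * Real.cosh z) / Real.sinh z ^ 2) z :=
    (Real.hasDerivAt_cosh z).div (Real.hasDerivAt_sinh z) hz
  have h2 : HasDerivAt (fun w => 1 / Real.sinh w)
      ((0 * Real.sinh z - 1 * Real.cosh z) / Real.sinh z ^ 2) z :=
    (hasDerivAt_const z 1).div (Real.hasDerivAt_sinh z) hz
  have h := (((hasDerivAt_const z (1:ℝ)).add h1).add h2).const_mul (-(A / (2 * B)))
  have hc := Real.cosh_sq z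
  simp only [mzkF, mzkF1, mzkF2, mzkF3]
  refine h.congr_deriv ?_
  field_simp
  linear_combination (A * B⁻¹) * hc

lemma mzk_hF2_s18 (A B : ℝ) : ∀ z : ℝ, Real.sinh z ≠ 0 →
    HasDerivAt (mzkF1 A B) (mzkF2 A B z) z := by
  intro z hz
  have hn : HasDerivAt (fun w => -(1 + Real.cosh w)) (-(0 + Real.sinh z)) z :=
    ((hasDerivAt_const z (1:ℝ)).add (Real.hasDerivAt_cosh z)).neg
  have hd : HasDerivAt (fun w => Real.sinh w ^ 2)
      (2 * Real.sinh z ^ 1 * Real.cosh z) z := (Real.hasDerivAt_sinh z).pow 2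
  have h := (hn.div hd (pow_ne_zero 2 hz)).const_mul (-(A / (2 * B)))
  have hc := Real.cosh_sq z
  simp only [mzkF, mzkF1, mzkF2, mzkF3]
  refine h.congr_deriv ?_
  field_simp
  ring_nf
  linear_combination (-(A * B⁻¹)) * hc

lemma mzk_hF3 (A B : ℝ) : ∀ z : ℝ, Real.sinh z ≠ 0 →
    HasDerivAt (mzkF2 A B) (mzkF3 A B z) z := by
  intro z hz
  have hn : HasDerivAt (fun w => (1 + Real.cosh w) ^ 2)
      (2 * (1 + Real.cosh z) ^ 1 * (0 + Real.sinh z)) z :=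
    ((hasDerivAt_const z (1:ℝ)).add (Real.hasDerivAt_cosh z)).pow 2
  have hd : HasDerivAt (fun w => Real.sinh w ^ 3)
      (3 * Real.sinh z ^ 2 * Real.cosh z) z := (Real.hasDerivAt_sinh z).pow 3
  have h := (hn.div hd (pow_ne_zero 3 hz)).const_mul (-(A / (2 * B)))
  have hc := Real.cosh_sq z
  simp only [mzkF, mzkF1, mzkF2, mzkF3]
  refine h.congr_deriv ?_
  field_simp
  ring_nf
  linear_combination (2 * A * B⁻¹) * hc

lemma mzk_affine {G G' : ℝ → ℝ}
    (hG : ∀ z : ℝ, Real.sinh z ≠ 0 → HasDerivAt G (G' z) z)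
    (m b w : ℝ) (hw : Real.sinh (m * w + b) ≠ 0) :
    HasDerivAt (fun z => G (m * z + b)) (G' (m * w + b) * m) w := by
  have hi : HasDerivAt (fun z : ℝ => m * z + b) m w := by
    simpa using ((hasDerivAt_id w).const_mul m).add_const b
  exact (hG _ hw).comp w hi

lemma mzk_affine_ev {G G' : ℝ → ℝ}
    (hG : ∀ z : ℝ, Real.sinh z ≠ 0 → HasDerivAt G (G' z) z)
    (m b w : ℝ) (hw : Real.sinh (m * w + b) ≠ 0) :
    deriv (fun z => G (m * z + b)) =ᶠ[nhds w] fun z => G' (m * z + b) * m := by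
  have hc : ContinuousAt (fun z : ℝ => Real.sinh (m * z + b)) w :=
    (Real.continuous_sinh.comp (by continuity)).continuousAt
  filter_upwards [hc.eventually_ne hw] with z hz
  exact (mzk_affine hG m b z hz).deriv

set_option maxHeartbeats 2000000 in
/-- The singular kink solution of the mZK equation corresponding to two real
double roots of P (Iqbal et al., Case 2), with c = -A²/(6B). -/
theorem stmt_18 (A B M N lam c : ℝ) (hB : B * (M + N) < 0)
    (hlam : lam = A ^ 2 / (6 * B * (M + N)))
    (hc : c = -A ^ 2 / (6 * B))
    (u : ℝ → ℝ → ℝ → ℝ)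
    (hu : ∀ x y t : ℝ, u x y t = -(A / (2 * B)) *
      (1 + Real.cosh (Real.sqrt (-lam) * (x + y - c * t)) /
            Real.sinh (Real.sqrt (-lam) * (x + y - c * t))
         + 1 / Real.sinh (Real.sqrt (-lam) * (x + y - c * t)))) :
    ∀ x y t : ℝ,
      Real.sinh (Real.sqrt (-lam) * (x + y - c * t)) ≠ 0 →
      deriv (fun t' => u x y t') t
        + A * u x y t * deriv (fun x' => u x' y t) x
        + B * (u x y t) ^ 2 * deriv (fun x' => u x' y t) x
        + M * deriv^[3] (fun x' => u x' y t) x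
        + N * deriv^[2] (fun y' => deriv (fun x' => u x' y' t) x) y = 0 := by
  have hB0 : B ≠ 0 := by rintro rfl; simp at hB
  have hMN : M + N ≠ 0 := by rintro h; rw [h, mul_zero] at hB; exact lt_irrefl _ hB
  have hlam0 : lam ≤ 0 := by
    rw [hlam]
    apply div_nonpos_of_nonneg_of_nonpos (sq_nonneg A)
    nlinarith
  intro x y t hS
  set k := Real.sqrt (-lam) with hkdef
  have hk2 : k ^ 2 = -lam := Real.sq_sqrt (by linarith)
  have hks : (M + N) * k ^ 2 = c := by
    rw [hk2, hlam, hc]; field_simp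
  set S := k * (x + y - c * t) with hSdef
  -- function rewrites
  have hfun_x : ∀ y' t' : ℝ, (fun x' => u x' y' t')
      = fun x' => mzkF A B (k * x' + k * (y' - c * t')) := by
    intro y' t'
    funext x'
    rw [hu, show k * x' + k * (y' - c * t') = k * (x' + y' - c * t') from by ring]
    rfl
  have hfun_t : (fun t' => u x y t')
      = fun t' => mzkF A B (-(k * c) * t' + k * (x + y)) := by
    funext t'
    rw [hu, show -(k * c) * t' + k * (x + y) = k * (x + y - c * t') from by ring]
    rfl
  have hSx : S = k * x + k * (y - c * t) := by rw [hSdef]; ring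
  have hSt : S = -(k * c) * t + k * (x + y) := by rw [hSdef]; ring
  have hSy : S = k * y + (k * x - k * (c * t)) := by rw [hSdef]; ring
  have hbx : Real.sinh (k * x + k * (y - c * t)) ≠ 0 := by rw [← hSx]; exact hS
  have hbt : Real.sinh (-(k * c) * t + k * (x + y)) ≠ 0 := by rw [← hSt]; exact hS
  have hby : Real.sinh (k * y + (k * x - k * (c * t))) ≠ 0 := by rw [← hSy]; exact hS
  -- useful derivative families
  have hG2 : ∀ z : ℝ, Real.sinh z ≠ 0 →
      HasDerivAt (fun z => mzkF1 A B z * k) (mzkF2 A B z * k) z :=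
    fun z hz => (mzk_hF2_s18 A B z hz).mul_const k
  have hG3 : ∀ z : ℝ, Real.sinh z ≠ 0 →
      HasDerivAt (fun z => mzkF2 A B z * k * k) (mzkF3 A B z * k * k) z :=
    fun z hz => ((mzk_hF3 A B z hz).mul_const k).mul_const k
  -- time derivative
  have hDt : deriv (fun t' => u x y t') t = mzkF1 A B S * (-(k * c)) := by
    rw [hfun_t]
    rw [(mzk_affine (mzk_hF1_s18 A B) (-(k * c)) (k * (x + y)) t hbt).deriv, ← hSt]
  -- x derivative
  have hDx : deriv (fun x' => u x' y t) x = mzkF1 A B S * k := by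
    rw [hfun_x y t]
    rw [(mzk_affine (mzk_hF1_s18 A B) k (k * (y - c * t)) x hbx).deriv, ← hSx]
  -- third x derivative
  have hDxxx : deriv^[3] (fun x' => u x' y t) x = mzkF3 A B S * k * k * k := by
    rw [hfun_x y t]
    have e1 := mzk_affine_ev (mzk_hF1_s18 A B) k (k * (y - c * t)) x hbx
    have e2 := mzk_affine_ev hG2 k (k * (y - c * t)) x hbx
    have e3 := (mzk_affine hG3 k (k * (y - c * t)) x hbx).deriv
    show deriv (deriv (deriv (fun x' => mzkF A B (k * x' + k * (y - c * t))))) x = _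
    rw [e1.deriv.deriv_eq, e2.deriv_eq, e3, ← hSx]
  -- mixed derivative
  have hDxyy : deriv^[2] (fun y' => deriv (fun x' => u x' y' t) x) y
      = mzkF3 A B S * k * k * k := by
    have hcont : ContinuousAt (fun y' : ℝ => Real.sinh (k * y' + (k * x - k * (c * t)))) y :=
      (Real.continuous_sinh.comp (by continuity)).continuousAt
    have hev0 : (fun y' => deriv (fun x' => u x' y' t) x)
        =ᶠ[nhds y] fun y' => mzkF1 A B (k * y' + (k * x - k * (c * t))) * k := by
      filter_upwards [hcont.eventually_ne hby] with y' hy'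
      rw [hfun_x y' t]
      have h := (mzk_affine (mzk_hF1_s18 A B) k (k * (y' - c * t)) x
        (by rwa [show k * x + k * (y' - c * t) = k * y' + (k * x - k * (c * t)) from by ring])).deriv
      rw [h, show k * x + k * (y' - c * t) = k * y' + (k * x - k * (c * t)) from by ring]
    have e2 := mzk_affine_ev hG2 k (k * x - k * (c * t)) y hby
    have e3 := (mzk_affine hG3 k (k * x - k * (c * t)) y hby).deriv
    show deriv (deriv (fun y' => deriv (fun x' => u x' y' t) x)) y = _
    rw [hev0.deriv.deriv_eq, e2.deriv_eq, e3, ← hSy]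
  rw [hDt, hDx, hDxxx, hDxyy, hu]
  -- algebra
  have hSh : Real.sinh (k * (x + y - c * t)) ≠ 0 := hS
  have hch := Real.cosh_sq (k * (x + y - c * t))
  set Sh := Real.sinh (k * (x + y - c * t)) with hShd
  set Ch := Real.cosh (k * (x + y - c * t)) with hChd
  have hSeq : S = k * (x + y - c * t) := hSdef
  have hF1S : mzkF1 A B S = -(A / (2 * B)) * (-(1 + Ch) / Sh ^ 2) := by
    rw [hSeq]; rfl
  have hF3S : mzkF3 A B S = -(A / (2 * B)) * (-((1 + Ch) ^ 2 * (Ch + 2)) / Sh ^ 4) := by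
    rw [hSeq]; rfl
  rw [hF1S, hF3S, hc]
  rw [hc] at hks
  have hks2 : 6 * B * ((M + N) * k ^ 2) = -A ^ 2 := by rw [hks]; field_simp
  field_simp
  linear_combination (4*A*(1+Ch)^2*k*(Ch+2)) * hks2 + (2*A^3*(1+Ch)*k) * hch
end
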